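/- arXiv:1504.03878 — 5 statements merged into one kernel-verified Lean document; each statement's English description precedes it below -/
import Mathlib

section
/- Let $n \geq 2$, let $p = (p_1,\ldots,p_n) \in (0,1)^n$ be a probability vector, and let $\lambda \in [0,1]$. Define $p'$ by $p'_i = p_i$ for $i \leq n-2$, $p'_{n-1} = \lambda p_{n-1} + (1-\lambda)p_n$, $p'_n = (1-\lambda)p_{n-1} + \lambda p_n$. Then for every $c \in \{1,\ldots,n\}$ and every $k \geq 0$, $\Pr\{T_{c,n}(p') > k\} \leq \Pr\{T_{c,n}(p) > k\}$, i.e., $T_{c,n}(p') \leq_{st} T_{c,n}(p)$. -/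
open Finset

/-- Number of distinct coupon types in a length-`k` sequence of draws. -/
def distinctCount {n k : ℕ} (f : Fin k → Fin n) : ℕ :=
  (Finset.image f Finset.univ).card

/-- `Pr{T_{c,n}(p) > k}`: probability that fewer than `c` distinct coupons
appear in `k` i.i.d. draws from the distribution `p` on `{1,…,n}`. -/
noncomputable def tailProb (n c k : ℕ) (p : Fin n → ℝ) : ℝ :=
  ∑ f : Fin k → Fin n, if distinctCount f < c then ∏ t, p (f t) else 0

lemma pow_mix_le (a b lam : ℝ) (ha : 0 ≤ a) (hb : 0 ≤ b) (h0 : 0 ≤ lam) (h1 : lam ≤ 1)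
    (r : ℕ) :
    (lam*a + (1-lam)*b)^r + ((1-lam)*a + lam*b)^r ≤ a^r + b^r := by
  have hc := (convexOn_pow (𝕜 := ℝ) r).2
  have hl : (0:ℝ) ≤ 1 - lam := by linarith
  have hsum1 : lam + (1 - lam) = 1 := by ring
  have hsum2 : (1 - lam) + lam = 1 := by ring
  have A := hc (Set.mem_Ici.2 ha) (Set.mem_Ici.2 hb) h0 hl hsum1
  have B := hc (Set.mem_Ici.2 ha) (Set.mem_Ici.2 hb) hl h0 hsum2
  simp only [smul_eq_mul] at A B
  nlinarith [A, B]

lemma distinctCount_comp_equiv {n k : ℕ} (σ : Equiv.Perm (Fin n)) (f : Fin k → Fin n) :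
    distinctCount (⇑σ ∘ f) = distinctCount f := by
  unfold distinctCount
  rw [show Finset.image (⇑σ ∘ f) Finset.univ = (Finset.image f Finset.univ).image σ from
    (Finset.image_image).symm]
  exact Finset.card_image_of_injective _ σ.injective

lemma key_lemma (n c k : ℕ) (e1 e2 : Fin n) (hne : e1 ≠ e2)
    (q q' : Fin n → ℝ) (hq : ∀ i, 0 ≤ q i) (hq' : ∀ i, 0 ≤ q' i)
    (hoff : ∀ i, i ≠ e1 → i ≠ e2 → q' i = q i)
    (hS : q' e1 + q' e2 = q e1 + q e2)
    (hpow : ∀ r : ℕ, q' e1 ^ r + q' e2 ^ r ≤ q e1 ^ r + q e2 ^ r) :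
    tailProb n c k q' ≤ tailProb n c k q := by
  classical
  unfold tailProb
  set F : (Fin n → ℝ) → (Fin k → Fin n) → ℝ :=
    fun qq f => if distinctCount f < c then ∏ t, qq (f t) else 0 with hF
  show ∑ f : Fin k → Fin n, F q' f ≤ ∑ f : Fin k → Fin n, F q f
  set π : (Fin k → Fin n) → (Fin k → Fin n) := fun f t => if f t = e2 then e1 else f t with hπ
  rw [← Finset.sum_fiberwise univ π (F q), ← Finset.sum_fiberwise univ π (F q')]
  apply Finset.sum_le_sum
  intro f0 _
  by_cases he2 : ∃ t, f0 t = e2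
  · have hempty : (univ.filter fun f => π f = f0) = (∅ : Finset (Fin k → Fin n)) := by
      rw [Finset.filter_eq_empty_iff]
      intro f _
      obtain ⟨t, ht⟩ := he2
      intro hf
      have h := congrFun hf t
      simp only [hπ] at h
      rw [ht] at h
      split_ifs at h with h'
      · exact hne h
      · exact h' h
    simp [hempty]
  · push_neg at he2
    set T : Finset (Fin k) := univ.filter fun t => f0 t = e1 with hT
    have hTmem : ∀ t, t ∈ T ↔ f0 t = e1 := by intro t; simp [hT]
    set fB : Finset (Fin k) → (Fin k → Fin n) := fun B t => if t ∈ B then e2 else f0 t with hfB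
    -- fiber = image of powerset
    have hbij : ∀ qq : Fin n → ℝ,
        ∑ f ∈ univ.filter (fun f => π f = f0), F qq f
          = ∑ B ∈ T.powerset, F qq (fB B) := by
      intro qq
      apply Finset.sum_nbij' (i := fun f => univ.filter fun t => f t = e2) (j := fB)
      · intro f hf
        simp only [Finset.mem_filter, Finset.mem_univ, true_and] at hf
        rw [Finset.mem_powerset]
        intro t ht
        simp only [Finset.mem_filter, Finset.mem_univ, true_and] at ht
        rw [hTmem]
        have h := congrFun hf t
        simp only [hπ, ht, if_pos] at h
        exact h.symm
      · intro B hB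
        rw [Finset.mem_powerset] at hB
        simp only [Finset.mem_filter, Finset.mem_univ, true_and]
        funext t
        by_cases htB : t ∈ B
        · simp only [hπ, hfB, htB, if_pos, if_true]
          exact ((hTmem t).1 (hB htB)).symm
        · simp only [hπ, hfB, htB, if_false, ite_false]
          rw [if_neg (he2 t)]
      · intro f hf
        simp only [Finset.mem_filter, Finset.mem_univ, true_and] at hf
        funext t
        by_cases ht : f t = e2
        · simp [hfB, ht]
        · simp only [hfB, Finset.mem_filter, Finset.mem_univ, true_and, ht, if_false, ite_false]
          have h := congrFun hf t
          simp only [hπ, ht, if_false, ite_false] at h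
          exact h.symm
      · intro B hB
        rw [Finset.mem_powerset] at hB
        ext t
        simp only [Finset.mem_filter, Finset.mem_univ, true_and, hfB]
        constructor
        · intro h
          by_cases htB : t ∈ B
          · exact htB
          · rw [if_neg htB] at h; exact absurd h (he2 t)
        · intro h; rw [if_pos h]
      · intro f hf
        simp only [Finset.mem_filter, Finset.mem_univ, true_and] at hf
        congr 1
        funext t
        by_cases ht : f t = e2
        · simp [hfB, ht]
        · simp only [hfB, Finset.mem_filter, Finset.mem_univ, true_and, ht, if_false, ite_false]
          have h := congrFun hf t
          simp only [hπ, ht, if_false, ite_false] at h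
          exact h
    rw [hbij q, hbij q']
    by_cases hTe : T = ∅
    · -- no draw position hits e1: everything agrees
      rw [hTe]
      rw [Finset.powerset_empty, Finset.sum_singleton, Finset.sum_singleton]
      apply le_of_eq
      have hfB0 : fB ∅ = f0 := by funext t; simp [hfB]
      rw [hfB0]
      simp only [hF]
      have : ∏ t, q' (f0 t) = ∏ t, q (f0 t) := by
        apply Finset.prod_congr rfl
        intro t _
        apply hoff
        · intro h; have : t ∈ T := (hTmem t).2 h; rw [hTe] at this; exact absurd this (Finset.notMem_empty t)
        · exact he2 t
      rw [this]
    · have hTne : T.Nonempty := Finset.nonempty_of_ne_empty hTe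
      set w : ℝ := ∏ t ∈ univ \ T, q (f0 t) with hw
      have hw0 : 0 ≤ w := Finset.prod_nonneg fun t _ => hq _
      -- distinct count facts
      have hfB0 : fB ∅ = f0 := by funext t; simp [hfB]
      have hd0 : distinctCount (fB ∅) = distinctCount f0 := by rw [hfB0]
      have hdT : distinctCount (fB T) = distinctCount f0 := by
        have hswap : fB T = ⇑(Equiv.swap e1 e2) ∘ f0 := by
          funext t
          by_cases ht : t ∈ T
          · simp only [hfB, ht, if_true, ite_true, Function.comp_apply]
            rw [(hTmem t).1 ht, Equiv.swap_apply_left]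
          · simp only [hfB, ht, if_false, ite_false, Function.comp_apply]
            rw [Equiv.swap_apply_of_ne_of_ne (fun h => ht ((hTmem t).2 h)) (he2 t)]
        rw [hswap, distinctCount_comp_equiv]
      have hdmid : ∀ B, B ⊆ T → B.Nonempty → B ≠ T →
          distinctCount (fB B) = distinctCount f0 + 1 := by
        intro B hB hBne hBT
        have hTB : (T \ B).Nonempty := by
          obtain ⟨t, ht, htn⟩ := Finset.exists_of_ssubset (hB.ssubset_of_ne hBT)
          exact ⟨t, Finset.mem_sdiff.2 ⟨ht, htn⟩⟩
        have himg : Finset.image (fB B) Finset.univ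
            = insert e2 (Finset.image f0 Finset.univ) := by
          ext x
          simp only [Finset.mem_image, Finset.mem_univ, true_and, Finset.mem_insert]
          constructor
          · rintro ⟨t, rfl⟩
            by_cases ht : t ∈ B
            · left; simp [hfB, ht]
            · right; exact ⟨t, by simp [hfB, ht]⟩
          · rintro (rfl | ⟨t, rfl⟩)
            · obtain ⟨t, ht⟩ := hBne
              exact ⟨t, by simp [hfB, ht]⟩
            · by_cases ht : t ∈ T
              · obtain ⟨t', ht'⟩ := hTB
                rw [Finset.mem_sdiff] at ht'
                refine ⟨t', ?_⟩
                simp only [hfB, ht'.2, if_false, ite_false]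
                rw [(hTmem t').1 ht'.1, (hTmem t).1 ht]
              · refine ⟨t, ?_⟩
                have : t ∉ B := fun h => ht (hB h)
                simp [hfB, this]
        unfold distinctCount
        rw [himg, Finset.card_insert_of_notMem]
        intro hmem
        rw [Finset.mem_image] at hmem
        obtain ⟨t, _, ht⟩ := hmem
        exact he2 t ht
      -- the closed formula for the fiber sum
      have hform : ∀ qq : Fin n → ℝ, (∀ i, i ≠ e1 → i ≠ e2 → qq i = q i) →
          ∑ B ∈ T.powerset, F qq (fB B)
          = (if distinctCount f0 < c then w * (qq e1 ^ T.card + qq e2 ^ T.card) else 0)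
            + (if distinctCount f0 + 1 < c then
                w * ((qq e1 + qq e2) ^ T.card - qq e1 ^ T.card - qq e2 ^ T.card) else 0) := by
        intro qq hq0
        set A : ℝ := qq e1 with hA
        set Bv : ℝ := qq e2 with hBv
        set g : Finset (Fin k) → ℝ := fun B => w * (A ^ (T \ B).card * Bv ^ B.card) with hg
        have hprod : ∀ B, B ⊆ T → ∏ t, qq (fB B t) = g B := by
          intro B hB
          rw [show (Finset.univ : Finset (Fin k)) = (univ \ T) ∪ T by
            rw [Finset.sdiff_union_self_eq_union]; simp]
          rw [Finset.prod_union (Finset.sdiff_disjoint)]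
          have hleft : ∏ t ∈ univ \ T, qq (fB B t) = w := by
            apply Finset.prod_congr rfl
            intro t ht
            rw [Finset.mem_sdiff] at ht
            have htB : t ∉ B := fun h => ht.2 (hB h)
            simp only [hfB, htB, if_false, ite_false]
            exact hq0 _ (fun h => ht.2 ((hTmem t).2 h)) (he2 t)
          have hright : ∏ t ∈ T, qq (fB B t) = A ^ (T \ B).card * Bv ^ B.card := by
            rw [← Finset.prod_sdiff hB]
            congr 1
            · rw [← Finset.prod_const]
              apply Finset.prod_congr rfl
              intro t ht
              rw [Finset.mem_sdiff] at ht
              simp only [hfB, ht.2, if_false, ite_false]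
              rw [(hTmem t).1 ht.1, hA]
            · rw [← Finset.prod_const]
              apply Finset.prod_congr rfl
              intro t ht
              simp [hfB, ht, hBv]
          rw [hleft, hright, hg]
        have hFg : ∀ B ∈ T.powerset, F qq (fB B)
            = if distinctCount (fB B) < c then g B else 0 := by
          intro B hB
          simp only [hF]
          rw [hprod B (Finset.mem_powerset.1 hB)]
        rw [Finset.sum_congr rfl hFg]
        have hmem0 : (∅ : Finset (Fin k)) ∈ T.powerset := Finset.empty_mem_powerset T
        have hmemT : T ∈ (T.powerset.erase ∅) :=
          Finset.mem_erase.2 ⟨hTe, Finset.mem_powerset_self T⟩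
        have hg0 : g ∅ = w * A ^ T.card := by
          simp [hg]
        have hgT : g T = w * Bv ^ T.card := by
          simp [hg]
        have htot : ∑ B ∈ T.powerset, g B = w * (A + Bv) ^ T.card := by
          rw [hg]
          simp only
          rw [← Finset.mul_sum]
          congr 1
          have hpa := Finset.prod_add (fun _ : Fin k => Bv) (fun _ : Fin k => A) T
          simp only [Finset.prod_const] at hpa
          rw [show A + Bv = Bv + A by ring, hpa]
          exact Finset.sum_congr rfl fun B _ => mul_comm _ _
        have hpeel : ∀ h : Finset (Fin k) → ℝ,
            ∑ B ∈ T.powerset, h B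
            = h ∅ + h T + ∑ B ∈ (T.powerset.erase ∅).erase T, h B := by
          intro h
          rw [← Finset.add_sum_erase _ h hmem0, ← Finset.add_sum_erase _ h hmemT]
          ring
        rw [hpeel]
        have hrem : ∑ B ∈ (T.powerset.erase ∅).erase T, g B
            = w * (A + Bv) ^ T.card - g ∅ - g T := by
          have := hpeel g
          rw [htot] at this
          linarith
        have hmid : ∀ B ∈ (T.powerset.erase ∅).erase T,
            (if distinctCount (fB B) < c then g B else 0)
            = if distinctCount f0 + 1 < c then g B else 0 := by
          intro B hB
          rw [Finset.mem_erase] at hB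
          obtain ⟨hBT, hB2⟩ := hB
          rw [Finset.mem_erase] at hB2
          obtain ⟨hBe, hBP⟩ := hB2
          rw [hdmid B (Finset.mem_powerset.1 hBP) (Finset.nonempty_of_ne_empty hBe) hBT]
        rw [Finset.sum_congr rfl hmid, hd0, hdT]
        by_cases hc1 : distinctCount f0 < c
        · by_cases hc2 : distinctCount f0 + 1 < c
          · simp only [if_pos hc1, if_pos hc2]
            rw [Finset.sum_congr rfl (fun B _ => rfl), hrem, hg0, hgT]
            ring
          · simp only [if_pos hc1, if_neg hc2]
            rw [Finset.sum_const_zero, hg0, hgT]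
            ring
        · have hc2 : ¬ (distinctCount f0 + 1 < c) := by omega
          simp only [if_neg hc1, if_neg hc2]
          rw [Finset.sum_const_zero]
          ring
      rw [hform q (fun i _ _ => rfl), hform q' hoff]
      have hr := hpow T.card
      by_cases hc1 : distinctCount f0 < c
      · by_cases hc2 : distinctCount f0 + 1 < c
        · rw [if_pos hc1, if_pos hc1, if_pos hc2, if_pos hc2, hS]
          have : w * (q' e1 ^ T.card + q' e2 ^ T.card)
              + w * ((q e1 + q e2) ^ T.card - q' e1 ^ T.card - q' e2 ^ T.card)
              = w * (q e1 + q e2) ^ T.card := by ring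
          rw [this]
          have : w * (q e1 ^ T.card + q e2 ^ T.card)
              + w * ((q e1 + q e2) ^ T.card - q e1 ^ T.card - q e2 ^ T.card)
              = w * (q e1 + q e2) ^ T.card := by ring
          rw [this]
        · rw [if_pos hc1, if_pos hc1, if_neg hc2, if_neg hc2, add_zero, add_zero]
          exact mul_le_mul_of_nonneg_left hr hw0
      · have hc2 : ¬ (distinctCount f0 + 1 < c) := by omega
        rw [if_neg hc1, if_neg hc1, if_neg hc2, if_neg hc2]

/-- Theorem 1 of the paper: averaging the last two entries of `p` by a
`λ`-mixing stochastically decreases the collection time `T_{c,n}`. -/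
theorem mixing_decreases_tail (n : ℕ) (hn : 2 ≤ n) (p p' : Fin n → ℝ)
    (hp : ∀ i, p i ∈ Set.Ioo (0:ℝ) 1) (hsum : ∑ i, p i = 1)
    (lam : ℝ) (hlam : lam ∈ Set.Icc (0:ℝ) 1)
    (h1 : ∀ i : Fin n, (i : ℕ) < n - 2 → p' i = p i)
    (h2 : p' ⟨n - 2, by omega⟩ =
      lam * p ⟨n - 2, by omega⟩ + (1 - lam) * p ⟨n - 1, by omega⟩)
    (h3 : p' ⟨n - 1, by omega⟩ =
      (1 - lam) * p ⟨n - 2, by omega⟩ + lam * p ⟨n - 1, by omega⟩)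
    (c : ℕ) (hc : 1 ≤ c) (hcn : c ≤ n) (k : ℕ) :
    tailProb n c k p' ≤ tailProb n c k p := by
  have h2n : n - 2 < n := by omega
  have h1nn : n - 1 < n := by omega
  have hl0 := hlam.1
  have hl1 := hlam.2
  have hpa := hp ⟨n - 2, h2n⟩
  have hpb := hp ⟨n - 1, h1nn⟩
  refine key_lemma n c k ⟨n - 2, h2n⟩ ⟨n - 1, h1nn⟩ ?_ p p'
    (fun i => (hp i).1.le) ?_ ?_ ?_ ?_
  · intro h
    have := congrArg Fin.val h
    simp only at this
    omega
  · intro i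
    by_cases hi1 : (i : ℕ) = n - 2
    · have : i = ⟨n - 2, h2n⟩ := Fin.ext hi1
      rw [this, h2]
      nlinarith [mul_nonneg hl0 hpa.1.le,
        mul_nonneg (by linarith : (0:ℝ) ≤ 1 - lam) hpb.1.le]
    · by_cases hi2 : (i : ℕ) = n - 1
      · have : i = ⟨n - 1, h1nn⟩ := Fin.ext hi2
        rw [this, h3]
        nlinarith [mul_nonneg hl0 hpb.1.le,
          mul_nonneg (by linarith : (0:ℝ) ≤ 1 - lam) hpa.1.le]
      · have hlt : (i : ℕ) < n - 2 := by have := i.isLt; omega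
        rw [h1 i hlt]
        exact (hp i).1.le
  · intro i hi1 hi2
    have hne1 : (i : ℕ) ≠ n - 2 := fun h => hi1 (Fin.ext h)
    have hne2 : (i : ℕ) ≠ n - 1 := fun h => hi2 (Fin.ext h)
    exact h1 i (by have := i.isLt; omega)
  · rw [h2, h3]; ring
  · intro r
    rw [h2, h3]
    exact pow_mix_le _ _ lam hpa.1.le hpb.1.le hl0 hl1 r
end

section
/- For every probability vector $p = (p_1,\ldots,p_n) \in (0,1)^n$ with $\sum_i p_i = 1$, and every $c \in \{1,\ldots,n\}$, the collection time satisfies $T_{c,n}(u) \leq_{st} T_{c,n}(p)$ where $u = (1/n, \ldots, 1/n)$ is the uniform distribution. That is, the uniform distribution stochastically minimizes the time to collect $c$ distinct coupons. -/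
set_option maxHeartbeats 1000000

open Finset

section Aux
variable {n k : ℕ}

def psiF (j : Fin n) (g : Fin k → Fin n) (h : Finset (Fin k)) : Fin k → Fin n :=
  fun t => if t ∈ h then j else g t

noncomputable def wgt (i j : Fin n) (r : Fin n → ℝ) (g : Fin k → Fin n)
    (h : Finset (Fin k)) (t : Fin k) : ℝ :=
  if t ∈ h then (if g t = i then r j else 0) else (if g t = j then 0 else r (g t))

noncomputable def trm (c : ℕ) (i j : Fin n) (r : Fin n → ℝ) (g : Fin k → Fin n)
    (h : Finset (Fin k)) : ℝ :=
  if distinctCount (psiF j g h) < c then ∏ t, wgt i j r g h t else 0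

lemma decomp (c : ℕ) (i j : Fin n) (r : Fin n → ℝ) :
    tailProb n c k r = ∑ g : Fin k → Fin n, ∑ h : Finset (Fin k), trm c i j r g h := by
  classical
  have hprod : ∑ g : Fin k → Fin n, ∑ h : Finset (Fin k), trm c i j r g h
      = ∑ x : (Fin k → Fin n) × Finset (Fin k), trm c i j r x.1 x.2 :=
    (Fintype.sum_prod_type (fun x : (Fin k → Fin n) × Finset (Fin k) => trm c i j r x.1 x.2)).symm
  rw [hprod]
  set Θ : (Fin k → Fin n) → (Fin k → Fin n) × Finset (Fin k) :=
    fun f => (fun t => if f t = j then i else f t, univ.filter fun t => f t = j) with hΘ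
  have hinj : ∀ f₁ ∈ (univ : Finset (Fin k → Fin n)), ∀ f₂ ∈ univ, Θ f₁ = Θ f₂ → f₁ = f₂ := by
    intro f₁ _ f₂ _ h
    have h1 : (fun t => if f₁ t = j then i else f₁ t) = fun t => if f₂ t = j then i else f₂ t :=
      congrArg Prod.fst h
    have h2 : (univ.filter fun t => f₁ t = j) = univ.filter fun t => f₂ t = j :=
      congrArg Prod.snd h
    funext t
    by_cases hj : f₁ t = j
    · have : t ∈ univ.filter fun t => f₂ t = j := by
        rw [← h2]; simp [hj]
      have : f₂ t = j := by simpa using this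
      rw [hj, this]
    · have hj2 : ¬ f₂ t = j := by
        intro hc
        have : t ∈ univ.filter fun t => f₁ t = j := by
          rw [h2]; simp [hc]
        exact hj (by simpa using this)
      have := congrFun h1 t
      simpa [hj, hj2] using this
  have hzero : ∀ x ∈ (univ : Finset ((Fin k → Fin n) × Finset (Fin k))),
      x ∉ univ.image Θ → trm c i j r x.1 x.2 = 0 := by
    rintro ⟨g, h⟩ - hx
    by_contra hne
    have hw : ∀ t, wgt i j r g h t ≠ 0 := by
      intro t ht
      apply hne
      unfold trm
      rw [Finset.prod_eq_zero (Finset.mem_univ t) ht]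
      simp
    have hgood : ∀ t, (t ∈ h → g t = i) ∧ (t ∉ h → g t ≠ j) := by
      intro t
      constructor
      · intro ht
        by_contra hgi
        exact hw t (by simp [wgt, ht, hgi])
      · intro ht hgj
        exact hw t (by simp [wgt, ht, hgj])
    apply hx
    refine Finset.mem_image.2 ⟨psiF j g h, Finset.mem_univ _, ?_⟩
    have hfst : (fun t => if psiF j g h t = j then i else psiF j g h t) = g := by
      funext t
      by_cases ht : t ∈ h
      · simp [psiF, ht, (hgood t).1 ht]
      · simp [psiF, ht, (hgood t).2 ht]
    have hsnd : (univ.filter fun t => psiF j g h t = j) = h := by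
      ext t
      by_cases ht : t ∈ h
      · simp [psiF, ht]
      · simp [psiF, ht, (hgood t).2 ht]
    rw [hΘ]
    exact Prod.ext hfst hsnd
  rw [← Finset.sum_subset (Finset.subset_univ (univ.image Θ)) hzero,
    Finset.sum_image hinj]
  apply Finset.sum_congr rfl
  intro f _
  have hpsi : psiF j (Θ f).1 (Θ f).2 = f := by
    funext t
    by_cases ht : f t = j
    · simp [psiF, hΘ, ht]
    · simp [psiF, hΘ, ht]
  have hwgt : ∀ t, wgt i j r (Θ f).1 (Θ f).2 t = r (f t) := by
    intro t
    by_cases ht : f t = j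
    · simp [wgt, hΘ, ht]
    · simp [wgt, hΘ, ht]
  unfold trm
  rw [hpsi]
  congr 1
  exact Finset.prod_congr rfl (fun t _ => (hwgt t).symm)

lemma inner_bad (c : ℕ) (i j : Fin n) (r : Fin n → ℝ) (g : Fin k → Fin n)
    (t0 : Fin k) (ht0 : g t0 = j) (hij : i ≠ j) :
    ∑ h : Finset (Fin k), trm c i j r g h = 0 := by
  apply Finset.sum_eq_zero
  intro h _
  have hw : wgt i j r g h t0 = 0 := by
    by_cases ht : t0 ∈ h
    · have : ¬ g t0 = i := by rw [ht0]; exact fun hc => hij hc.symm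
      simp [wgt, ht, this]
    · simp [wgt, ht, ht0]
  unfold trm
  rw [Finset.prod_eq_zero (Finset.mem_univ t0) hw]
  simp


lemma inner_empty (c : ℕ) (i j : Fin n) (r : Fin n → ℝ) (g : Fin k → Fin n)
    (hg : ∀ t, g t ≠ j) (hP : univ.filter (fun t => g t = i) = ∅) :
    ∑ h : Finset (Fin k), trm c i j r g h =
      if (Finset.image g Finset.univ).card < c then ∏ t, r (g t) else 0 := by
  classical
  have hgi : ∀ t, g t ≠ i := by
    intro t ht
    have : t ∈ univ.filter (fun t => g t = i) := by simp [ht]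
    simp [hP] at this
  have hzero : ∀ h ∈ (univ : Finset (Finset (Fin k))), h ∉ ({∅} : Finset (Finset (Fin k))) →
      trm c i j r g h = 0 := by
    intro h _ hne
    have : h.Nonempty := Finset.nonempty_iff_ne_empty.2 (by simpa using hne)
    obtain ⟨t, ht⟩ := this
    have hw : wgt i j r g h t = 0 := by simp [wgt, ht, hgi t]
    unfold trm
    rw [Finset.prod_eq_zero (Finset.mem_univ t) hw]
    simp
  rw [← Finset.sum_subset (Finset.subset_univ ({∅} : Finset (Finset (Fin k)))) hzero,
    Finset.sum_singleton]
  have hpsi : psiF j g ∅ = g := by funext t; simp [psiF]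
  unfold trm distinctCount
  rw [hpsi]
  congr 1
  apply Finset.prod_congr rfl
  intro t _
  simp [wgt, hg t]

lemma inner_pos (c : ℕ) (i j : Fin n) (hij : i ≠ j) (r : Fin n → ℝ) (g : Fin k → Fin n)
    (hg : ∀ t, g t ≠ j) (hP : (univ.filter (fun t => g t = i)).Nonempty) :
    ∑ h : Finset (Fin k), trm c i j r g h =
      (∏ t ∈ univ.filter (fun t => ¬ g t = i), r (g t)) *
      ((if ((univ.filter (fun t => ¬ g t = i)).image g).card + 1 < c then 1 else 0) *
          (r i ^ (univ.filter (fun t => g t = i)).card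
            + r j ^ (univ.filter (fun t => g t = i)).card)
        + (if ((univ.filter (fun t => ¬ g t = i)).image g).card + 2 < c then 1 else 0) *
          ((r i + r j) ^ (univ.filter (fun t => g t = i)).card
            - r i ^ (univ.filter (fun t => g t = i)).card
            - r j ^ (univ.filter (fun t => g t = i)).card)) := by
  classical
  set P := univ.filter (fun t => g t = i) with hPdef
  set Q := univ.filter (fun t => ¬ g t = i) with hQdef
  set D := Q.image g with hDdef
  set C := ∏ t ∈ Q, r (g t) with hCdef
  set m := P.card with hmdef
  set d := D.card with hddef
  have hmemP : ∀ t, t ∈ P ↔ g t = i := by intro t; simp [hPdef]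
  have hmemQ : ∀ t, t ∈ Q ↔ ¬ g t = i := by intro t; simp [hQdef]
  have hiD : i ∉ D := by
    intro hmem
    obtain ⟨t, ht, hgt⟩ := Finset.mem_image.1 hmem
    exact ((hmemQ t).1 ht) hgt
  have hjD : j ∉ D := by
    intro hmem
    obtain ⟨t, _, hgt⟩ := Finset.mem_image.1 hmem
    exact hg t hgt
  -- restrict sum to powerset of P
  have hzero : ∀ h ∈ (univ : Finset (Finset (Fin k))), h ∉ P.powerset →
      trm c i j r g h = 0 := by
    intro h _ hne
    rw [Finset.mem_powerset] at hne
    obtain ⟨t, hth, htP⟩ := Finset.not_subset.1 hne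
    have hgt : ¬ g t = i := fun hc => htP ((hmemP t).2 hc)
    have hw : wgt i j r g h t = 0 := by simp [wgt, hth, hgt]
    unfold trm
    rw [Finset.prod_eq_zero (Finset.mem_univ t) hw]
    simp
  rw [← Finset.sum_subset (Finset.subset_univ P.powerset) hzero]
  -- product evaluation for h ⊆ P
  have hprodval : ∀ h ∈ P.powerset,
      (∏ t, wgt i j r g h t) = C * (r j ^ h.card * r i ^ (m - h.card)) := by
    intro h hh
    rw [Finset.mem_powerset] at hh
    have hdisj : ∀ t ∈ Q, t ∉ h := by
      intro t ht hth
      exact ((hmemQ t).1 ht) ((hmemP t).1 (hh hth))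
    have hsplit : (∏ t ∈ P, wgt i j r g h t) * (∏ t ∈ Q, wgt i j r g h t)
        = ∏ t, wgt i j r g h t :=
      Finset.prod_filter_mul_prod_filter_not univ (fun t => g t = i) _
    rw [← hsplit]
    have hQval : ∏ t ∈ Q, wgt i j r g h t = C := by
      apply Finset.prod_congr rfl
      intro t ht
      simp [wgt, hdisj t ht, hg t]
    have hPsplit : (∏ t ∈ P.filter (· ∈ h), wgt i j r g h t) *
        (∏ t ∈ P.filter (· ∉ h), wgt i j r g h t) = ∏ t ∈ P, wgt i j r g h t :=
      Finset.prod_filter_mul_prod_filter_not P (· ∈ h) _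
    have hfilh : P.filter (· ∈ h) = h := by
      ext t
      simp only [Finset.mem_filter]
      exact ⟨fun ⟨_, ht⟩ => ht, fun ht => ⟨hh ht, ht⟩⟩
    have hfilnh : P.filter (· ∉ h) = P \ h := by
      rw [Finset.sdiff_eq_filter]
    have h1 : ∏ t ∈ P.filter (· ∈ h), wgt i j r g h t = r j ^ h.card := by
      rw [hfilh]
      rw [Finset.prod_congr rfl (g := fun _ => r j) ?_, Finset.prod_const]
      intro t ht
      simp [wgt, ht, (hmemP t).1 (hh ht)]
    have h2 : ∏ t ∈ P.filter (· ∉ h), wgt i j r g h t = r i ^ (m - h.card) := by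
      rw [hfilnh]
      rw [Finset.prod_congr rfl (g := fun _ => r i) ?_, Finset.prod_const,
        Finset.card_sdiff_of_subset hh]
      intro t ht
      rw [Finset.mem_sdiff] at ht
      have hgt : g t = i := (hmemP t).1 ht.1
      simp [wgt, ht.2, hgt, hij]
    rw [← hPsplit, h1, h2, hQval]
    ring
  -- distinct counts
  have hcnt0 : distinctCount (psiF j g ∅) = d + 1 := by
    have hpsi : psiF j g ∅ = g := by funext t; simp [psiF]
    have himg : Finset.image g Finset.univ = insert i D := by
      ext v
      simp only [Finset.mem_image, Finset.mem_insert, hDdef]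
      constructor
      · rintro ⟨t, _, rfl⟩
        by_cases hti : g t = i
        · exact Or.inl hti
        · exact Or.inr ⟨t, (hmemQ t).2 hti, rfl⟩
      · rintro (rfl | ⟨t, _, rfl⟩)
        · obtain ⟨t, ht⟩ := hP
          exact ⟨t, Finset.mem_univ t, (hmemP t).1 ht⟩
        · exact ⟨t, Finset.mem_univ t, rfl⟩
    unfold distinctCount
    rw [hpsi, himg, Finset.card_insert_of_notMem hiD]
  have hcntP : distinctCount (psiF j g P) = d + 1 := by
    have himg : Finset.image (psiF j g P) Finset.univ = insert j D := by
      ext v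
      simp only [Finset.mem_image, Finset.mem_insert, hDdef]
      constructor
      · rintro ⟨t, _, rfl⟩
        by_cases htP : t ∈ P
        · exact Or.inl (by simp [psiF, htP])
        · refine Or.inr ⟨t, ?_, by simp [psiF, htP]⟩
          exact (hmemQ t).2 (fun hc => htP ((hmemP t).2 hc))
      · rintro (rfl | ⟨t, ht, rfl⟩)
        · obtain ⟨t, ht⟩ := hP
          exact ⟨t, Finset.mem_univ t, by simp [psiF, ht]⟩
        · have htP : t ∉ P := fun hc => ((hmemQ t).1 ht) ((hmemP t).1 hc)
          exact ⟨t, Finset.mem_univ t, by simp [psiF, htP]⟩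
    unfold distinctCount
    rw [himg, Finset.card_insert_of_notMem hjD]
  have hcntmid : ∀ h ∈ P.powerset, h ≠ ∅ → h ≠ P →
      distinctCount (psiF j g h) = d + 2 := by
    intro h hh hne hnP
    rw [Finset.mem_powerset] at hh
    have himg : Finset.image (psiF j g h) Finset.univ = insert i (insert j D) := by
      ext v
      simp only [Finset.mem_image, Finset.mem_insert, hDdef]
      constructor
      · rintro ⟨t, _, rfl⟩
        by_cases hth : t ∈ h
        · exact Or.inr (Or.inl (by simp [psiF, hth]))
        · by_cases hti : g t = i
          · exact Or.inl (by simp [psiF, hth, hti])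
          · exact Or.inr (Or.inr ⟨t, (hmemQ t).2 hti, by simp [psiF, hth]⟩)
      · rintro (rfl | rfl | ⟨t, ht, rfl⟩)
        · obtain ⟨t, ht⟩ := Finset.nonempty_iff_ne_empty.2
            (fun hc : (P \ h) = ∅ => hnP (Finset.Subset.antisymm hh (Finset.sdiff_eq_empty_iff_subset.1 hc)))
          rw [Finset.mem_sdiff] at ht
          exact ⟨t, Finset.mem_univ t, by simp [psiF, ht.2, (hmemP t).1 ht.1]⟩
        · obtain ⟨t, ht⟩ := Finset.nonempty_iff_ne_empty.2 hne
          exact ⟨t, Finset.mem_univ t, by simp [psiF, ht]⟩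
        · have hth : t ∉ h := fun hc => ((hmemQ t).1 ht) ((hmemP t).1 (hh hc))
          exact ⟨t, Finset.mem_univ t, by simp [psiF, hth]⟩
    unfold distinctCount
    rw [himg, Finset.card_insert_of_notMem (by
        simp only [Finset.mem_insert]
        rintro (rfl | hc)
        · exact hij rfl
        · exact hiD hc),
      Finset.card_insert_of_notMem hjD]
  -- split the powerset sum
  have hpairsub : ({∅, P} : Finset (Finset (Fin k))) ⊆ P.powerset := by
    intro x hx
    rw [Finset.mem_insert, Finset.mem_singleton] at hx
    rcases hx with rfl | rfl
    · exact Finset.empty_mem_powerset P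
    · exact Finset.mem_powerset_self P
  rw [← Finset.sum_sdiff hpairsub]
  have hPne : P ≠ ∅ := Finset.nonempty_iff_ne_empty.1 hP
  have hpairsum : ∑ h ∈ ({∅, P} : Finset (Finset (Fin k))), trm c i j r g h
      = (if d + 1 < c then 1 else 0) * (C * r i ^ m) + (if d + 1 < c then 1 else 0) * (C * r j ^ m) := by
    rw [Finset.sum_insert (by simpa using Ne.symm hPne), Finset.sum_singleton]
    unfold trm
    rw [hcnt0, hcntP, hprodval ∅ (Finset.empty_mem_powerset P),
      hprodval P (Finset.mem_powerset_self P)]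
    simp only [Finset.card_empty, pow_zero, Nat.sub_zero, Nat.sub_self, ← hmdef]
    by_cases hcase : d + 1 < c <;> simp [hcase] <;> ring
  have hmidsum : ∑ h ∈ P.powerset \ ({∅, P} : Finset (Finset (Fin k))), trm c i j r g h
      = (if d + 2 < c then 1 else 0) * (C * ((r j + r i) ^ m - r i ^ m - r j ^ m)) := by
    have hterm : ∀ h ∈ P.powerset \ ({∅, P} : Finset (Finset (Fin k))),
        trm c i j r g h = (if d + 2 < c then 1 else 0) * (C * (r j ^ h.card * r i ^ (m - h.card))) := by
      intro h hh
      rw [Finset.mem_sdiff, Finset.mem_insert, Finset.mem_singleton] at hh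
      push_neg at hh
      unfold trm
      rw [hcntmid h hh.1 (Finset.nonempty_iff_ne_empty.1 hh.2.1) hh.2.2, hprodval h hh.1]
      by_cases hcase : d + 2 < c <;> simp [hcase]
    rw [Finset.sum_congr rfl hterm, ← Finset.mul_sum, ← Finset.mul_sum]
    congr 1
    congr 1
    have hfull : ∑ h ∈ P.powerset, (r j ^ h.card * r i ^ (m - h.card)) = (r j + r i) ^ m := by
      have hpa := Finset.prod_add (fun _ : Fin k => r j) (fun _ : Fin k => r i) P
      rw [Finset.prod_const] at hpa
      rw [hmdef, hpa]
      apply Finset.sum_congr rfl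
      intro h hh
      rw [Finset.mem_powerset] at hh
      rw [Finset.prod_const, Finset.prod_const, Finset.card_sdiff_of_subset hh]
    have hsd := Finset.sum_sdiff (f := fun h : Finset (Fin k) => r j ^ h.card * r i ^ (m - h.card)) hpairsub
    have hpair2 : ∑ h ∈ ({∅, P} : Finset (Finset (Fin k))), (r j ^ h.card * r i ^ (m - h.card))
        = r i ^ m + r j ^ m := by
      rw [Finset.sum_insert (by simpa using Ne.symm hPne), Finset.sum_singleton]
      simp [← hmdef, Nat.sub_self]
    linarith
  rw [hpairsum, hmidsum]
  by_cases h1 : d + 1 < c <;> by_cases h2 : d + 2 < c <;> simp only [h1, h2, if_true, if_false] <;> ring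

end Aux

lemma tailProb_perm (n c k : ℕ) (p : Fin n → ℝ) (σ : Equiv.Perm (Fin n)) :
    tailProb n c k (fun v => p (σ v)) = tailProb n c k p := by
  unfold tailProb
  apply Fintype.sum_equiv (Equiv.arrowCongr (Equiv.refl (Fin k)) σ)
  intro f
  have h1 : distinctCount ((Equiv.arrowCongr (Equiv.refl (Fin k)) σ) f) = distinctCount f := by
    unfold distinctCount
    have : Finset.image ((Equiv.arrowCongr (Equiv.refl (Fin k)) σ) f) Finset.univ
        = Finset.image σ (Finset.image f Finset.univ) := by
      rw [Finset.image_image]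
      rfl
    rw [this, Finset.card_image_of_injective _ σ.injective]
  rw [h1]
  congr 1


lemma scalar_key (A B C a b l : ℝ) (m : ℕ) (hC : 0 ≤ C) (hB : 0 ≤ B) (hBA : B ≤ A)
    (ha : 0 ≤ a) (hb : 0 ≤ b) (hl : 0 ≤ l) (hl1 : l ≤ 1) :
    C * (A * ((l*a+(1-l)*b)^m + (l*b+(1-l)*a)^m)
        + B * (((l*a+(1-l)*b) + (l*b+(1-l)*a))^m - (l*a+(1-l)*b)^m - (l*b+(1-l)*a)^m))
      ≤ C * (A * (a^m + b^m) + B * ((a+b)^m - a^m - b^m)) := by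
  have hx : (l*a+(1-l)*b)^m ≤ l * a^m + (1-l) * b^m := by
    have := (convexOn_pow m).2 (Set.mem_Ici.2 ha) (Set.mem_Ici.2 hb) hl (show (0:ℝ) ≤ 1 - l by linarith) (show l + (1 - l) = 1 by ring)
    simpa using this
  have hy : (l*b+(1-l)*a)^m ≤ l * b^m + (1-l) * a^m := by
    have := (convexOn_pow m).2 (Set.mem_Ici.2 hb) (Set.mem_Ici.2 ha) hl (show (0:ℝ) ≤ 1 - l by linarith) (show l + (1 - l) = 1 by ring)
    simpa using this
  have hs : (l*a+(1-l)*b) + (l*b+(1-l)*a) = a + b := by ring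
  rw [hs]
  have hXY : (l*a+(1-l)*b)^m + (l*b+(1-l)*a)^m ≤ a^m + b^m := by linarith
  have hCAB : 0 ≤ C * (A - B) := mul_nonneg hC (by linarith)
  nlinarith [mul_le_mul_of_nonneg_left hXY hCAB]

lemma tTransform_le (n c k : ℕ) (p : Fin n → ℝ) (hp : ∀ v, 0 ≤ p v)
    (i j : Fin n) (hij : i ≠ j) (l : ℝ) (hl : 0 ≤ l) (hl1 : l ≤ 1) :
    tailProb n c k (fun v => l * p v + (1 - l) * p (Equiv.swap i j v))
      ≤ tailProb n c k p := by
  classical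
  have hqp : tailProb n c k (fun v => p (Equiv.swap i j v)) = tailProb n c k p :=
    tailProb_perm n c k p (Equiv.swap i j)
  have hmain : tailProb n c k (fun v => l * p v + (1 - l) * p (Equiv.swap i j v))
      ≤ l * tailProb n c k p + (1 - l) * tailProb n c k (fun v => p (Equiv.swap i j v)) := by
    rw [decomp c i j (fun v => l * p v + (1 - l) * p (Equiv.swap i j v)),
      decomp c i j p, decomp c i j (fun v => p (Equiv.swap i j v)),
      Finset.mul_sum, Finset.mul_sum, ← Finset.sum_add_distrib]
    apply Finset.sum_le_sum
    intro g _
    by_cases hbad : ∃ t0, g t0 = j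
    · obtain ⟨t0, ht0⟩ := hbad
      rw [inner_bad c i j _ g t0 ht0 hij, inner_bad c i j _ g t0 ht0 hij,
        inner_bad c i j _ g t0 ht0 hij]
      simp
    push_neg at hbad
    have hgi : ∀ t, g t ≠ i → (Equiv.swap i j) (g t) = g t := by
      intro t ht
      exact Equiv.swap_apply_of_ne_of_ne ht (hbad t)
    by_cases hPe : univ.filter (fun t => g t = i) = ∅
    · have hgni : ∀ t, ¬ g t = i := by
        intro t ht
        have : t ∈ univ.filter (fun t => g t = i) := by simp [ht]
        simp [hPe] at this
      rw [inner_empty c i j _ g hbad hPe, inner_empty c i j _ g hbad hPe,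
        inner_empty c i j _ g hbad hPe]
      have h1 : ∏ t, (l * p (g t) + (1 - l) * p (Equiv.swap i j (g t))) = ∏ t, p (g t) := by
        apply Finset.prod_congr rfl
        intro t _
        rw [hgi t (hgni t)]
        ring
      have h2 : ∏ t, p (Equiv.swap i j (g t)) = ∏ t, p (g t) := by
        apply Finset.prod_congr rfl
        intro t _
        rw [hgi t (hgni t)]
      rw [h1, h2]
      split_ifs with hcnt
      · exact le_of_eq (by ring)
      · exact le_of_eq (by ring)
    · have hPne : (univ.filter (fun t => g t = i)).Nonempty :=
        Finset.nonempty_iff_ne_empty.2 hPe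
      rw [inner_pos c i j hij _ g hbad hPne, inner_pos c i j hij _ g hbad hPne,
        inner_pos c i j hij _ g hbad hPne]
      simp only [Equiv.swap_apply_left, Equiv.swap_apply_right]
      have hQ1 : ∏ t ∈ univ.filter (fun t => ¬ g t = i),
          (l * p (g t) + (1 - l) * p (Equiv.swap i j (g t)))
          = ∏ t ∈ univ.filter (fun t => ¬ g t = i), p (g t) := by
        apply Finset.prod_congr rfl
        intro t ht
        rw [Finset.mem_filter] at ht
        rw [hgi t ht.2]
        ring
      have hQ2 : ∏ t ∈ univ.filter (fun t => ¬ g t = i), p (Equiv.swap i j (g t))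
          = ∏ t ∈ univ.filter (fun t => ¬ g t = i), p (g t) := by
        apply Finset.prod_congr rfl
        intro t ht
        rw [Finset.mem_filter] at ht
        rw [hgi t ht.2]
      rw [hQ1, hQ2]
      set C := ∏ t ∈ univ.filter (fun t => ¬ g t = i), p (g t) with hC
      set d := ((univ.filter (fun t => ¬ g t = i)).image g).card with hd
      set m := (univ.filter (fun t => g t = i)).card with hm
      set A := (if d + 1 < c then (1:ℝ) else 0) with hA
      set B := (if d + 2 < c then (1:ℝ) else 0) with hB
      have hCnn : 0 ≤ C := Finset.prod_nonneg (fun t _ => hp (g t))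
      have hBnn : 0 ≤ B := by rw [hB]; split_ifs <;> norm_num
      have hBA : B ≤ A := by
        rw [hA, hB]
        split_ifs with h1 h2 <;> try norm_num
        omega
      have key := scalar_key A B C (p i) (p j) l m hCnn hBnn hBA (hp i) (hp j) hl hl1
      have hcomm : (p j + p i) ^ m = (p i + p j) ^ m := by rw [add_comm]
      have hrhs : l * (C * (A * (p i ^ m + p j ^ m) + B * ((p i + p j) ^ m - p i ^ m - p j ^ m)))
          + (1 - l) * (C * (A * (p j ^ m + p i ^ m) + B * ((p j + p i) ^ m - p j ^ m - p i ^ m)))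
          = C * (A * (p i ^ m + p j ^ m) + B * ((p i + p j) ^ m - p i ^ m - p j ^ m)) := by
        rw [hcomm]; ring
      linarith [key, hrhs]
  rw [hqp] at hmain
  have hfin : l * tailProb n c k p + (1 - l) * tailProb n c k p = tailProb n c k p := by ring
  linarith [hmain, hfin]

lemma uniform_min_aux (n c k : ℕ) (hn : 1 ≤ n) : ∀ N : ℕ, ∀ p : Fin n → ℝ,
    (∀ v, 0 ≤ p v) → (∑ v, p v = 1) →
    (univ.filter (fun v => p v ≠ 1 / (n:ℝ))).card ≤ N →
    tailProb n c k (fun _ => 1 / (n:ℝ)) ≤ tailProb n c k p := by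
  intro N
  induction N with
  | zero =>
    intro p hp hsum hcard
    have : ∀ v, p v = 1 / (n:ℝ) := by
      intro v
      by_contra hv
      have : v ∈ univ.filter (fun v => p v ≠ 1 / (n:ℝ)) := by
        simp only [Finset.mem_filter]
        exact ⟨Finset.mem_univ v, hv⟩
      have := Finset.card_pos.2 ⟨v, this⟩
      omega
    have hpu : p = fun _ => 1 / (n:ℝ) := funext this
    rw [hpu]
  | succ N ih =>
    intro p hp hsum hcard
    by_cases hN : (univ.filter (fun v => p v ≠ 1 / (n:ℝ))).card ≤ N
    · exact ih p hp hsum hN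
    -- there is a nonuniform coordinate
    have hne : (univ.filter (fun v => p v ≠ 1 / (n:ℝ))).Nonempty := by
      rw [Finset.nonempty_iff_ne_empty]
      intro hc
      rw [hc] at hN
      simp at hN
    have hnpos : (0:ℝ) < n := by positivity
    have husum : ∑ _v : Fin n, (1:ℝ) / n = 1 := by
      rw [Finset.sum_const, Finset.card_univ, Fintype.card_fin, nsmul_eq_mul]
      field_simp
    obtain ⟨v0, hv0⟩ := hne
    rw [Finset.mem_filter] at hv0
    have hvi : ∃ i, 1 / (n:ℝ) < p i := by
      by_contra hc
      push_neg at hc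
      have : ∑ v, p v < ∑ _v : Fin n, (1:ℝ)/n := by
        apply Finset.sum_lt_sum (fun v _ => hc v)
        exact ⟨v0, Finset.mem_univ v0, lt_of_le_of_ne (hc v0) hv0.2⟩
      rw [hsum, husum] at this
      exact lt_irrefl _ this
    have hvj : ∃ j, p j < 1 / (n:ℝ) := by
      by_contra hc
      push_neg at hc
      have : ∑ _v : Fin n, (1:ℝ)/n < ∑ v, p v := by
        apply Finset.sum_lt_sum (fun v _ => hc v)
        exact ⟨v0, Finset.mem_univ v0, lt_of_le_of_ne (hc v0) (Ne.symm hv0.2)⟩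
      rw [hsum, husum] at this
      exact lt_irrefl _ this
    obtain ⟨i, hi⟩ := hvi
    obtain ⟨j, hj⟩ := hvj
    have hij : i ≠ j := by
      intro hc
      rw [hc] at hi
      exact lt_irrefl _ (hi.trans hj)
    set l := (1 / (n:ℝ) - p j) / (p i - p j) with hl
    have hdpos : 0 < p i - p j := by linarith
    have hl0 : 0 ≤ l := by
      apply div_nonneg _ hdpos.le
      linarith
    have hl1 : l ≤ 1 := by
      rw [hl, div_le_one hdpos]
      linarith
    set p' := fun v => l * p v + (1 - l) * p (Equiv.swap i j v) with hp'
    have hp'i : p' i = 1 / (n:ℝ) := by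
      rw [hp']
      simp only [Equiv.swap_apply_left]
      rw [hl]
      field_simp
      ring
    have hp'v : ∀ v, v ≠ i → v ≠ j → p' v = p v := by
      intro v hvi hvj
      rw [hp']
      simp only [Equiv.swap_apply_of_ne_of_ne hvi hvj]
      ring
    have hp'nn : ∀ v, 0 ≤ p' v := by
      intro v
      have h1 := hp v
      have h2 := hp (Equiv.swap i j v)
      have h3 : (0:ℝ) ≤ 1 - l := by linarith
      show 0 ≤ l * p v + (1 - l) * p (Equiv.swap i j v)
      exact add_nonneg (mul_nonneg hl0 h1) (mul_nonneg h3 h2)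
    have hp'sum : ∑ v, p' v = 1 := by
      rw [hp']
      rw [Finset.sum_add_distrib, ← Finset.mul_sum, ← Finset.mul_sum]
      have : ∑ v, p (Equiv.swap i j v) = ∑ v, p v := Equiv.sum_comp (Equiv.swap i j) p
      rw [this, hsum]
      ring
    have hsubset : univ.filter (fun v => p' v ≠ 1 / (n:ℝ))
        ⊆ (univ.filter (fun v => p v ≠ 1 / (n:ℝ))).erase i := by
      intro v hv
      rw [Finset.mem_filter] at hv
      rw [Finset.mem_erase, Finset.mem_filter]
      have hvni : v ≠ i := by
        intro hc
        rw [hc, hp'i] at hv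
        exact hv.2 rfl
      refine ⟨hvni, Finset.mem_univ v, ?_⟩
      by_cases hvj2 : v = j
      · rw [hvj2]; exact ne_of_lt hj
      · rw [← hp'v v hvni hvj2]; exact hv.2
    have hcard' : (univ.filter (fun v => p' v ≠ 1 / (n:ℝ))).card ≤ N := by
      have h1 := Finset.card_le_card hsubset
      have hi_mem : i ∈ univ.filter (fun v => p v ≠ 1 / (n:ℝ)) := by
        simp only [Finset.mem_filter]
        exact ⟨Finset.mem_univ i, ne_of_gt hi⟩
      rw [Finset.card_erase_of_mem hi_mem] at h1
      omega
    calc tailProb n c k (fun _ => 1 / (n:ℝ)) ≤ tailProb n c k p' :=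
          ih p' hp'nn hp'sum hcard'
      _ ≤ tailProb n c k p := tTransform_le n c k p hp i j hij l hl0 hl1

/-- Theorem 2 of the paper: the uniform distribution stochastically minimizes
the time to collect `c` distinct coupons. -/
theorem uniform_minimizes (n : ℕ) (hn : 1 ≤ n) (p : Fin n → ℝ)
    (hp : ∀ i, p i ∈ Set.Ioo (0:ℝ) 1) (hsum : ∑ i, p i = 1)
    (c : ℕ) (hc : 1 ≤ c) (hcn : c ≤ n) (k : ℕ) :
    tailProb n c k (fun _ => 1 / n) ≤ tailProb n c k p := by
  exact uniform_min_aux n c k hn (univ.filter (fun v => p v ≠ 1 / (n:ℝ))).card p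
    (fun v => (hp v).1.le) hsum le_rfl
end

section
/- Let $p = (p_1,\ldots,p_n) \in (0,1)^n$ with $\sum_i p_i < 1$, $p_0 = 1 - \sum_i p_i$, and let $v = ((1-p_0)/n, \ldots, (1-p_0)/n)$ and $u = (1/n,\ldots,1/n)$. Then for every $c \in \{1,\ldots,n\}$, $T_{c,n}(u) \leq_{st} T_{c,n}(v) \leq_{st} T_{c,n}(p)$. -/
open Finset

/-- Full distribution on `{0,1,…,n}` where coupon `0` is the null coupon, drawn
with probability `p₀ = 1 - ∑ pᵢ`. -/
noncomputable def fullDist {n : ℕ} (p : Fin n → ℝ) : Fin (n + 1) → ℝ :=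
  Fin.cases (1 - ∑ j, p j) p

/-- `N_j^{(k)}`: number of draws equal to `j` among the `k` draws `f`. -/
def count0 {n k : ℕ} (f : Fin k → Fin (n + 1)) (j : Fin (n + 1)) : ℕ :=
  (Finset.univ.filter (fun t => f t = j)).card

/-- Number of distinct non-null coupon types in a length-`k` draw sequence. -/
def nonnullCount {n k : ℕ} (f : Fin k → Fin (n + 1)) : ℕ :=
  ((Finset.image f Finset.univ).erase 0).card

/-- `Pr{T_{c,n}(p) > k}` in the generalized (null-coupon) model: probability that
fewer than `c` distinct non-null coupons appear among `k` i.i.d. draws. -/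
noncomputable def tailProb0 (n c k : ℕ) (p : Fin n → ℝ) : ℝ :=
  ∑ f : Fin k → Fin (n + 1), if nonnullCount f < c then ∏ t, fullDist p (f t) else 0

/-! ### Auxiliary development -/

lemma pow_pair_le {x a b y : ℝ} (hx : 0 ≤ x) (h1 : x ≤ a) (h2 : a ≤ b) (h3 : b ≤ y)
    (hs : a + b = x + y) (m : ℕ) : a ^ m + b ^ m ≤ x ^ m + y ^ m := by
  rcases eq_or_lt_of_le (h1.trans (h2.trans h3)) with h | hxy
  · have ha : a = x := le_antisymm (by linarith) h1
    have hb : b = y := by linarith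
    rw [ha, hb]
  · have hconv : ConvexOn ℝ (Set.Ici 0) (fun t : ℝ => t ^ m) := convexOn_pow m
    have hyx : 0 < y - x := by linarith
    set lam : ℝ := (y - a) / (y - x) with hlam
    have hl0 : 0 ≤ lam := div_nonneg (by linarith) (by linarith)
    have hl1 : lam ≤ 1 := by
      rw [div_le_one hyx]; linarith
    have hmem_x : x ∈ Set.Ici (0:ℝ) := hx
    have hmem_y : y ∈ Set.Ici (0:ℝ) := by simp only [Set.mem_Ici]; linarith
    have hcomb1 : lam * x + (1 - lam) * y = a := by
      have h4 : lam * (y - x) = y - a := by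
        rw [hlam]; field_simp
      linarith [h4]
    have hcomb2 : (1 - lam) * x + lam * y = b := by
      have h4 : lam * (y - x) = y - a := by
        rw [hlam]; field_simp
      nlinarith [h4]
    have e1 := hconv.2 hmem_x hmem_y hl0 (by linarith) (by ring : lam + (1 - lam) = 1)
    have e2 := hconv.2 hmem_x hmem_y (by linarith : (0:ℝ) ≤ 1 - lam) hl0 (by ring)
    simp only [smul_eq_mul] at e1 e2
    rw [hcomb1] at e1
    rw [hcomb2] at e2
    nlinarith [e1, e2]

/-- Tail of the uniform (no-null) collection process as a Markov recursion. -/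
noncomputable def tauU (n c : ℕ) (q : Fin n → ℝ) : ℕ → Finset (Fin n) → ℝ
  | 0, S => if S.card < c then 1 else 0
  | (k+1), S => ∑ l, q l * tauU n c q k (insert l S)

/-- Tail of the null-coupon collection process as a Markov recursion. -/
noncomputable def tau0 (n c : ℕ) (q : Fin n → ℝ) : ℕ → Finset (Fin (n+1)) → ℝ
  | 0, S => if (S.erase 0).card < c then 1 else 0
  | (k+1), S => (1 - ∑ l, q l) * tau0 n c q k S + ∑ l, q l * tau0 n c q k (insert l.succ S)

lemma image_cons {k : ℕ} {α : Type*} [DecidableEq α] (v : α) (g : Fin k → α) :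
    Finset.image (Fin.cons v g : Fin (k+1) → α) Finset.univ
      = insert v (Finset.image g Finset.univ) := by
  ext w
  simp only [mem_image, mem_insert, mem_univ, true_and]
  constructor
  · rintro ⟨t, ht⟩
    rcases Fin.eq_zero_or_eq_succ t with rfl | ⟨t', rfl⟩
    · left; simpa using ht.symm
    · right; exact ⟨t', by simpa using ht⟩
  · rintro (rfl | ⟨t', ht⟩)
    · exact ⟨0, by simp⟩
    · exact ⟨t'.succ, by simpa using ht⟩

lemma sum_pi_succ {k : ℕ} {α : Type*} [Fintype α] [DecidableEq α] (F : (Fin (k+1) → α) → ℝ) :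
    ∑ f : Fin (k+1) → α, F f = ∑ v : α, ∑ g : Fin k → α, F (Fin.cons v g) := by
  rw [show (∑ v : α, ∑ g : Fin k → α, F (Fin.cons v g))
      = ∑ p : α × (Fin k → α), F (Fin.cons p.1 p.2) from
    (Fintype.sum_prod_type (fun p : α × (Fin k → α) => F (Fin.cons p.1 p.2))).symm]
  exact Fintype.sum_equiv (Fin.consEquiv (fun _ => α)).symm _ _ (fun f => by
    simp [Fin.consEquiv, Fin.cons_self_tail])

lemma ZU_eq (n c : ℕ) (q : Fin n → ℝ) :
    ∀ (k : ℕ) (S : Finset (Fin n)),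
      (∑ f : Fin k → Fin n, if (S ∪ Finset.image f Finset.univ).card < c
        then ∏ t, q (f t) else 0) = tauU n c q k S := by
  intro k
  induction k with
  | zero =>
      intro S
      rw [Fintype.sum_unique]
      simp [tauU]
  | succ k ih =>
      intro S
      rw [sum_pi_succ]
      simp only [tauU]
      refine Finset.sum_congr rfl fun v _ => ?_
      rw [← ih (insert v S), Finset.mul_sum]
      refine Finset.sum_congr rfl fun g _ => ?_
      rw [image_cons, Fin.prod_univ_succ]
      simp only [Fin.cons_zero, Fin.cons_succ]
      have : S ∪ insert v (Finset.image g Finset.univ)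
          = insert v S ∪ Finset.image g Finset.univ := by
        rw [Finset.union_insert, Finset.insert_union]
      rw [this]
      split <;> ring

lemma tau0_insert_zero (n c : ℕ) (q : Fin n → ℝ) :
    ∀ (k : ℕ) (S : Finset (Fin (n+1))), tau0 n c q k (insert 0 S) = tau0 n c q k S := by
  intro k
  induction k with
  | zero => intro S; simp [tau0, Finset.erase_insert_eq_erase]
  | succ k ih2 =>
      intro S
      simp only [tau0]
      congr 1
      · rw [ih2]
      · refine Finset.sum_congr rfl fun l _ => ?_
        rw [Finset.insert_comm, ih2]

lemma Z0_eq (n c : ℕ) (q : Fin n → ℝ) :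
    ∀ (k : ℕ) (S : Finset (Fin (n+1))),
      (∑ f : Fin k → Fin (n+1), if ((S ∪ Finset.image f Finset.univ).erase 0).card < c
        then ∏ t, fullDist q (f t) else 0) = tau0 n c q k S := by
  intro k
  induction k with
  | zero =>
      intro S
      rw [Fintype.sum_unique]
      simp [tau0]
  | succ k ih =>
      intro S
      rw [sum_pi_succ]
      have hterm : ∀ v : Fin (n+1), ∀ g : Fin k → Fin (n+1),
          (if ((S ∪ Finset.image (Fin.cons v g : Fin (k+1) → Fin (n+1)) Finset.univ).erase 0).card < c
            then ∏ t, fullDist q ((Fin.cons v g : Fin (k+1) → Fin (n+1)) t) else 0)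
          = fullDist q v * (if (((insert v S) ∪ Finset.image g Finset.univ).erase 0).card < c
              then ∏ t, fullDist q (g t) else 0) := by
        intro v g
        rw [image_cons, Fin.prod_univ_succ]
        simp only [Fin.cons_zero, Fin.cons_succ]
        have : S ∪ insert v (Finset.image g Finset.univ)
            = insert v S ∪ Finset.image g Finset.univ := by
          rw [Finset.union_insert, Finset.insert_union]
        rw [this]
        split <;> ring
      have hrw : ∀ v : Fin (n+1),
          (∑ g : Fin k → Fin (n+1), if ((S ∪ Finset.image (Fin.cons v g : Fin (k+1) → Fin (n+1)) Finset.univ).erase 0).card < c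
            then ∏ t, fullDist q ((Fin.cons v g : Fin (k+1) → Fin (n+1)) t) else 0)
          = fullDist q v * tau0 n c q k (insert v S) := by
        intro v
        rw [← ih (insert v S), Finset.mul_sum]
        exact Finset.sum_congr rfl fun g _ => hterm v g
      calc ∑ v : Fin (n+1), ∑ g : Fin k → Fin (n+1), _ = ∑ v : Fin (n+1), fullDist q v * tau0 n c q k (insert v S) :=
            Finset.sum_congr rfl fun v _ => hrw v
        _ = tau0 n c q (k+1) S := by
            rw [Fin.sum_univ_succ]
            have h0 : fullDist q 0 = 1 - ∑ l, q l := rfl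
            have hs : ∀ l : Fin n, fullDist q l.succ = q l := fun l => rfl
            have hins0 : tau0 n c q k (insert 0 S) = tau0 n c q k S :=
              tau0_insert_zero n c q k S
            simp only [tau0, h0, hs, hins0]

lemma tau0_nonneg (n c : ℕ) (q : Fin n → ℝ) (hq : ∀ l, 0 ≤ q l) (hs : ∑ l, q l ≤ 1) :
    ∀ (k : ℕ) (S : Finset (Fin (n+1))), 0 ≤ tau0 n c q k S := by
  intro k
  induction k with
  | zero => intro S; simp only [tau0]; split <;> norm_num
  | succ k ih =>
      intro S
      simp only [tau0]
      have h1 : (0:ℝ) ≤ (1 - ∑ l, q l) * tau0 n c q k S :=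
        mul_nonneg (by linarith) (ih S)
      have h2 : (0:ℝ) ≤ ∑ l, q l * tau0 n c q k (insert l.succ S) :=
        Finset.sum_nonneg fun l _ => mul_nonneg (hq l) (ih _)
      linarith

lemma tau0_mono (n c : ℕ) (q : Fin n → ℝ) (hq : ∀ l, 0 ≤ q l) (hs : ∑ l, q l ≤ 1) :
    ∀ (k : ℕ) (S T : Finset (Fin (n+1))), S ⊆ T → tau0 n c q k T ≤ tau0 n c q k S := by
  intro k
  induction k with
  | zero =>
      intro S T hST
      simp only [tau0]
      have hcard : (S.erase 0).card ≤ (T.erase 0).card :=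
        Finset.card_le_card (Finset.erase_subset_erase _ hST)
      split
      · split
        · norm_num
        · omega
      · split <;> norm_num
  | succ k ih =>
      intro S T hST
      simp only [tau0]
      have h1 : tau0 n c q k T ≤ tau0 n c q k S := ih S T hST
      have h2 : ∀ l : Fin n, tau0 n c q k (insert l.succ T) ≤ tau0 n c q k (insert l.succ S) :=
        fun l => ih _ _ (Finset.insert_subset_insert _ hST)
      have := Finset.sum_le_sum (fun l (_ : l ∈ univ) =>
        mul_le_mul_of_nonneg_left (h2 l) (hq l))
      have h3 := mul_le_mul_of_nonneg_left h1 (by linarith : (0:ℝ) ≤ 1 - ∑ l, q l)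
      linarith

lemma uniform_le_almost (n c : ℕ) (hn : 1 ≤ n) (s : ℝ) (hs0 : 0 ≤ s) (hs1 : s ≤ 1) :
    ∀ (k : ℕ) (S : Finset (Fin n)),
      tauU n c (fun _ => 1 / (n:ℝ)) k S
        ≤ tau0 n c (fun _ => s / (n:ℝ)) k (S.map (Fin.succEmb n)) := by
  have hnpos : (0:ℝ) < n := by exact_mod_cast hn
  have hq : ∀ l : Fin n, (0:ℝ) ≤ s / n := fun _ => div_nonneg hs0 hnpos.le
  have hsum : ∑ _l : Fin n, s / (n:ℝ) = s := by
    rw [Finset.sum_const, card_univ, Fintype.card_fin, nsmul_eq_mul]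
    field_simp
  intro k
  induction k with
  | zero =>
      intro S
      simp only [tauU, tau0]
      have h0 : (0 : Fin (n+1)) ∉ S.map (Fin.succEmb n) := by
        simp only [Finset.mem_map]
        rintro ⟨l, -, hl⟩
        exact Fin.succ_ne_zero l (by simpa [Fin.succEmb] using hl)
      rw [Finset.erase_eq_of_notMem h0, Finset.card_map]
  | succ k ih =>
      intro S
      simp only [tauU, tau0]
      have hmap : ∀ l : Fin n, (insert l S).map (Fin.succEmb n)
          = insert l.succ (S.map (Fin.succEmb n)) := by
        intro l; rw [Finset.map_insert]; rfl
      set M := S.map (Fin.succEmb n) with hM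
      have step1 : ∑ l : Fin n, (1/(n:ℝ)) * tauU n c (fun _ => 1/(n:ℝ)) k (insert l S)
          ≤ ∑ l : Fin n, (1/(n:ℝ)) * tau0 n c (fun _ => s/(n:ℝ)) k (insert l.succ M) := by
        refine Finset.sum_le_sum fun l _ => ?_
        have := ih (insert l S)
        rw [hmap l] at this
        exact mul_le_mul_of_nonneg_left this (by positivity)
      have hmono : ∀ l : Fin n, tau0 n c (fun _ => s/(n:ℝ)) k (insert l.succ M)
          ≤ tau0 n c (fun _ => s/(n:ℝ)) k M := by
        intro l
        exact tau0_mono n c _ hq (le_of_eq hsum |>.trans hs1) k M _ (Finset.subset_insert _ _)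
      set A := ∑ l : Fin n, (1/(n:ℝ)) * tau0 n c (fun _ => s/(n:ℝ)) k (insert l.succ M) with hA
      have hAB : A ≤ tau0 n c (fun _ => s/(n:ℝ)) k M := by
        calc A ≤ ∑ _l : Fin n, (1/(n:ℝ)) * tau0 n c (fun _ => s/(n:ℝ)) k M :=
              Finset.sum_le_sum fun l _ => mul_le_mul_of_nonneg_left (hmono l) (by positivity)
          _ = tau0 n c (fun _ => s/(n:ℝ)) k M := by
              rw [Finset.sum_const, card_univ, Fintype.card_fin, nsmul_eq_mul]
              field_simp
      have hsum' : ∑ _l : Fin n, s / (n:ℝ) = s := hsum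
      have hrhs : (1 - ∑ _l : Fin n, s/(n:ℝ)) * tau0 n c (fun _ => s/(n:ℝ)) k M
            + ∑ l : Fin n, (s/(n:ℝ)) * tau0 n c (fun _ => s/(n:ℝ)) k (insert l.succ M)
          = (1 - s) * tau0 n c (fun _ => s/(n:ℝ)) k M + s * A := by
        rw [hsum', hA, Finset.mul_sum]
        congr 1
        refine Finset.sum_congr rfl fun l _ => ?_
        field_simp
      calc ∑ l : Fin n, (1/(n:ℝ)) * tauU n c (fun _ => 1/(n:ℝ)) k (insert l S) ≤ A := step1
        _ ≤ (1 - s) * tau0 n c (fun _ => s/(n:ℝ)) k M + s * A := by nlinarith [hAB]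
        _ = _ := hrhs.symm

lemma sum_split {n : ℕ} {i j : Fin n} (hij : i ≠ j) (F : Fin n → ℝ) :
    ∑ l, F l = F i + F j + ∑ l ∈ (univ.erase i).erase j, F l := by
  have hj : j ∈ univ.erase i := Finset.mem_erase.2 ⟨hij.symm, Finset.mem_univ j⟩
  rw [← Finset.add_sum_erase _ F (Finset.mem_univ i), ← Finset.add_sum_erase _ F hj]
  ring

lemma tau0_expand (n c : ℕ) (r : Fin n → ℝ) {i j : Fin n} (hij : i ≠ j) (k : ℕ)
    (S : Finset (Fin (n+1))) :
    tau0 n c r (k+1) S = (1 - ∑ l, r l) * tau0 n c r k S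
      + (r i * tau0 n c r k (insert i.succ S) + r j * tau0 n c r k (insert j.succ S)
        + ∑ l ∈ (univ.erase i).erase j, r l * tau0 n c r k (insert l.succ S)) := by
  simp only [tau0]
  congr 1
  exact sum_split hij _

/-- The key symmetric functional used in the Schur-convexity induction. -/
noncomputable def phi (n c : ℕ) (r : Fin n → ℝ) (i j : Fin n) (m k : ℕ)
    (S : Finset (Fin (n+1))) : ℝ :=
  (r i)^(m+1) * tau0 n c r k (insert i.succ S) + (r j)^(m+1) * tau0 n c r k (insert j.succ S)
    + ((r i + r j)^(m+1) - (r i)^(m+1) - (r j)^(m+1))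
      * tau0 n c r k (insert j.succ (insert i.succ S))

lemma phi_succ (n c : ℕ) (r : Fin n → ℝ) {i j : Fin n} (hij : i ≠ j) (m k : ℕ)
    (S : Finset (Fin (n+1))) :
    phi n c r i j m (k+1) S = (1 - ∑ l, r l) * phi n c r i j m k S
      + ∑ l ∈ (univ.erase i).erase j, r l * phi n c r i j m k (insert l.succ S)
      + phi n c r i j (m+1) k S := by
  have e1 : insert i.succ (insert i.succ S) = insert i.succ S := Finset.insert_idem _ _
  have e2 : insert j.succ (insert j.succ S) = insert j.succ S := Finset.insert_idem _ _
  have e3 : insert i.succ (insert j.succ S) = insert j.succ (insert i.succ S) :=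
    Finset.insert_comm _ _ _
  have e4 : insert i.succ (insert j.succ (insert i.succ S)) = insert j.succ (insert i.succ S) := by
    rw [Finset.insert_comm, Finset.insert_idem]
  have e5 : insert j.succ (insert j.succ (insert i.succ S)) = insert j.succ (insert i.succ S) :=
    Finset.insert_idem _ _
  simp only [phi]
  rw [tau0_expand n c r hij k (insert i.succ S), tau0_expand n c r hij k (insert j.succ S),
    tau0_expand n c r hij k (insert j.succ (insert i.succ S))]
  rw [e1, e2, e3, e4, e5]
  have hsum_rw : (∑ x ∈ (univ.erase i).erase j, r x *
        ((r i)^(m+1) * tau0 n c r k (insert i.succ (insert x.succ S))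
        + (r j)^(m+1) * tau0 n c r k (insert j.succ (insert x.succ S))
        + ((r i + r j)^(m+1) - (r i)^(m+1) - (r j)^(m+1))
          * tau0 n c r k (insert j.succ (insert i.succ (insert x.succ S)))))
      = (r i)^(m+1) * (∑ x ∈ (univ.erase i).erase j, r x * tau0 n c r k (insert x.succ (insert i.succ S)))
      + (r j)^(m+1) * (∑ x ∈ (univ.erase i).erase j, r x * tau0 n c r k (insert x.succ (insert j.succ S)))
      + ((r i + r j)^(m+1) - (r i)^(m+1) - (r j)^(m+1))
        * (∑ x ∈ (univ.erase i).erase j, r x * tau0 n c r k (insert x.succ (insert j.succ (insert i.succ S)))) := by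
    rw [Finset.mul_sum, Finset.mul_sum, Finset.mul_sum, ← Finset.sum_add_distrib,
      ← Finset.sum_add_distrib]
    refine Finset.sum_congr rfl fun l _ => ?_
    rw [Finset.insert_comm i.succ l.succ, Finset.insert_comm j.succ l.succ S,
      Finset.insert_comm j.succ l.succ (insert i.succ S)]
    ring
  rw [hsum_rw]
  ring

lemma transfer (n c : ℕ) (q q' : Fin n → ℝ) (hq : ∀ l, 0 ≤ q l) (hsum : ∑ l, q l ≤ 1)
    (i j : Fin n) (hij : i ≠ j)
    (h1 : q i ≤ q' i) (h2 : q' i ≤ q' j) (h3 : q' j ≤ q j)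
    (hab : q' i + q' j = q i + q j)
    (hother : ∀ l, l ≠ i → l ≠ j → q' l = q l) :
    ∀ (k : ℕ) (S : Finset (Fin (n+1))), i.succ ∉ S → j.succ ∉ S →
      (tau0 n c q' k S ≤ tau0 n c q k S) ∧
      (∀ m : ℕ, phi n c q' i j m k S ≤ phi n c q i j m k S) := by
  have hsum' : ∑ l, q' l = ∑ l, q l := by
    rw [sum_split hij q', sum_split hij q]
    have : ∑ l ∈ (univ.erase i).erase j, q' l = ∑ l ∈ (univ.erase i).erase j, q l :=
      Finset.sum_congr rfl fun l hl => by
        have hl' := Finset.mem_erase.1 hl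
        have hl'' := Finset.mem_erase.1 hl'.2
        exact hother l hl''.1 hl'.1
    rw [this]; linarith
  have hIJ : i.succ ≠ j.succ := fun h => hij (Fin.succ_injective n h)
  have hI0 : (i.succ : Fin (n+1)) ≠ 0 := Fin.succ_ne_zero i
  have hJ0 : (j.succ : Fin (n+1)) ≠ 0 := Fin.succ_ne_zero j
  intro k
  induction k with
  | zero =>
      intro S hI hJ
      constructor
      · simp only [tau0]; exact le_refl _
      · intro m
        have cardI : ((insert i.succ S).erase 0).card = (S.erase 0).card + 1 := by
          rw [Finset.erase_insert_of_ne hI0, Finset.card_insert_of_notMem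
            (fun h => hI (Finset.mem_of_mem_erase h))]
        have cardJ : ((insert j.succ S).erase 0).card = (S.erase 0).card + 1 := by
          rw [Finset.erase_insert_of_ne hJ0, Finset.card_insert_of_notMem
            (fun h => hJ (Finset.mem_of_mem_erase h))]
        have cardIJ : ((insert j.succ (insert i.succ S)).erase 0).card
            = (S.erase 0).card + 2 := by
          rw [Finset.erase_insert_of_ne hJ0, Finset.erase_insert_of_ne hI0,
            Finset.card_insert_of_notMem, Finset.card_insert_of_notMem
              (fun h => hI (Finset.mem_of_mem_erase h))]
          intro h
          rcases Finset.mem_insert.1 h with h' | h'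
          · exact hIJ.symm h'
          · exact hJ (Finset.mem_of_mem_erase h')
        simp only [phi, tau0, cardI, cardJ, cardIJ]
        by_cases hc2 : (S.erase 0).card + 2 < c
        · have hc1 : (S.erase 0).card + 1 < c := by omega
          simp only [if_pos hc1, if_pos hc2, mul_one]
          rw [hab]
          ring_nf
          exact le_refl _
        · by_cases hc1 : (S.erase 0).card + 1 < c
          · simp only [if_pos hc1, if_neg hc2, mul_one, mul_zero]
            have := pow_pair_le (hq i) h1 h2 h3 hab (m+1)
            linarith
          · simp only [if_neg hc1, if_neg hc2, mul_zero]
            norm_num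
  | succ k ih =>
      intro S hI hJ
      have hq' : ∀ l, 0 ≤ q' l := by
        intro l
        by_cases hli : l = i
        · subst hli; linarith [hq l]
        · by_cases hlj : l = j
          · subst hlj; linarith [hq i]
          · rw [hother l hli hlj]; exact hq l
      have restmem : ∀ l ∈ (univ.erase i).erase j, l ≠ i ∧ l ≠ j := by
        intro l hl
        have hl' := Finset.mem_erase.1 hl
        have hl'' := Finset.mem_erase.1 hl'.2
        exact ⟨hl''.1, hl'.1⟩
      have hInotmem : ∀ l : Fin n, l ≠ i → ∀ T : Finset (Fin (n+1)), i.succ ∉ T →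
          i.succ ∉ insert l.succ T := by
        intro l hl T hT h
        rcases Finset.mem_insert.1 h with h' | h'
        · exact hl (Fin.succ_injective n h'.symm)
        · exact hT h'
      have hJnotmem : ∀ l : Fin n, l ≠ j → ∀ T : Finset (Fin (n+1)), j.succ ∉ T →
          j.succ ∉ insert l.succ T := by
        intro l hl T hT h
        rcases Finset.mem_insert.1 h with h' | h'
        · exact hl (Fin.succ_injective n h'.symm)
        · exact hT h'
      have hq0 : (0:ℝ) ≤ 1 - ∑ l, q l := by linarith
      have restle : ∀ l ∈ (univ.erase i).erase j,
          q' l * tau0 n c q' k (insert l.succ S) ≤ q l * tau0 n c q k (insert l.succ S) := by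
        intro l hl
        obtain ⟨hli, hlj⟩ := restmem l hl
        rw [hother l hli hlj]
        exact mul_le_mul_of_nonneg_left
          ((ih (insert l.succ S) (hInotmem l hli S hI) (hJnotmem l hlj S hJ)).1) (hq l)
      constructor
      · rw [tau0_expand n c q' hij k S, tau0_expand n c q hij k S, hsum']
        have hphi0 : ∀ r : Fin n → ℝ, phi n c r i j 0 k S
            = r i * tau0 n c r k (insert i.succ S) + r j * tau0 n c r k (insert j.succ S)
              + (r i + r j - r i - r j)
                * tau0 n c r k (insert j.succ (insert i.succ S)) := by
          intro r; simp only [phi, Nat.zero_add, pow_one]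
        have hm0 := (ih S hI hJ).2 0
        rw [hphi0 q', hphi0 q] at hm0
        have hz : ∀ r : Fin n → ℝ, ∀ t : ℝ, (r i + r j - r i - r j) * t = 0 := by
          intro r t; ring
        rw [hz q', hz q] at hm0
        have h0le := mul_le_mul_of_nonneg_left (ih S hI hJ).1 hq0
        have hrest := Finset.sum_le_sum restle
        linarith
      · intro m
        rw [phi_succ n c q' hij m k S, phi_succ n c q hij m k S, hsum']
        have hA := mul_le_mul_of_nonneg_left ((ih S hI hJ).2 m) hq0
        have hB := (ih S hI hJ).2 (m+1)
        have hC : ∑ l ∈ (univ.erase i).erase j, q' l * phi n c q' i j m k (insert l.succ S)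
            ≤ ∑ l ∈ (univ.erase i).erase j, q l * phi n c q i j m k (insert l.succ S) := by
          refine Finset.sum_le_sum fun l hl => ?_
          obtain ⟨hli, hlj⟩ := restmem l hl
          rw [hother l hli hlj]
          refine mul_le_mul_of_nonneg_left ?_ (hq l)
          exact (ih (insert l.succ S) (hInotmem l hli S hI) (hJnotmem l hlj S hJ)).2 m
        linarith

lemma schur (n c : ℕ) (hn : 1 ≤ n) (s : ℝ) (hs0 : 0 ≤ s) (hs1 : s ≤ 1) (k : ℕ) :
    ∀ (N : ℕ) (q : Fin n → ℝ), (∀ l, 0 ≤ q l) → (∑ l, q l = s) →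
      ((univ.filter (fun l => q l ≠ s / (n:ℝ))).card ≤ N) →
      tau0 n c (fun _ => s / (n:ℝ)) k ∅ ≤ tau0 n c q k ∅ := by
  have hnpos : (0:ℝ) < n := by exact_mod_cast hn
  set μ : ℝ := s / n with hμ
  have hsum_const : ∑ _l : Fin n, μ = s := by
    rw [Finset.sum_const, card_univ, Fintype.card_fin, nsmul_eq_mul, hμ]
    field_simp
  have hμ0 : 0 ≤ μ := div_nonneg hs0 hnpos.le
  intro N
  induction N with
  | zero =>
      intro q hq hqs hcard
      have hfe : (univ.filter (fun l => q l ≠ μ)) = ∅ := Finset.card_eq_zero.1 (le_antisymm hcard (Nat.zero_le _))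
      have hconst : (fun _ : Fin n => μ) = q := by
        funext l
        by_contra h
        have : l ∈ univ.filter (fun l => q l ≠ μ) :=
          Finset.mem_filter.2 ⟨Finset.mem_univ l, fun h' => h h'.symm⟩
        rw [hfe] at this
        exact absurd this (Finset.notMem_empty l)
      rw [hconst]
  | succ N ih =>
      intro q hq hqs hcard
      by_cases hle : (univ.filter (fun l => q l ≠ μ)).card ≤ N
      · exact ih q hq hqs hle
      · have hne : (univ.filter (fun l => q l ≠ μ)).Nonempty := by
          rw [← Finset.card_pos]; omega
        have hexi : ∃ i, μ < q i := by
          by_contra h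
          push_neg at h
          obtain ⟨l, hl⟩ := hne
          have hlq : q l ≠ μ := (Finset.mem_filter.1 hl).2
          have : ∑ l, q l < ∑ _l : Fin n, μ :=
            Finset.sum_lt_sum (fun m _ => h m) ⟨l, Finset.mem_univ l, lt_of_le_of_ne (h l) hlq⟩
          rw [hqs, hsum_const] at this
          exact lt_irrefl s this
        have hexj : ∃ j, q j < μ := by
          by_contra h
          push_neg at h
          obtain ⟨l, hl⟩ := hne
          have hlq : q l ≠ μ := (Finset.mem_filter.1 hl).2
          have : ∑ _l : Fin n, μ < ∑ l, q l :=
            Finset.sum_lt_sum (fun m _ => h m) ⟨l, Finset.mem_univ l, lt_of_le_of_ne (h l) (Ne.symm hlq)⟩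
          rw [hqs, hsum_const] at this
          exact lt_irrefl s this
        obtain ⟨i, hi⟩ := hexi
        obtain ⟨j, hj⟩ := hexj
        have hij : i ≠ j := fun h => by rw [h] at hi; linarith
        set t : ℝ := q i + q j - μ with ht
        have htj : q j < t := by linarith
        have hti : t < q i := by linarith
        have hsumle : ∑ l, q l ≤ 1 := by rw [hqs]; exact hs1
        have himem : i ∈ univ.filter (fun l => q l ≠ μ) :=
          Finset.mem_filter.2 ⟨Finset.mem_univ i, fun h => by rw [h] at hi; exact lt_irrefl μ hi⟩
        have hjmem : j ∈ univ.filter (fun l => q l ≠ μ) :=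
          Finset.mem_filter.2 ⟨Finset.mem_univ j, fun h => by rw [h] at hj; exact lt_irrefl μ hj⟩
        rcases le_total t μ with hcase | hcase
        · set q' : Fin n → ℝ := fun l => if l = j then t else if l = i then μ else q l with hq'
          have hq'j : q' j = t := by simp [hq']
          have hq'i : q' i = μ := by simp [hq', hij]
          have hother : ∀ l, l ≠ j → l ≠ i → q' l = q l := by
            intro l hlj hli; simp [hq', hlj, hli]
          have htrans := transfer n c q q' hq hsumle j i hij.symm
            (by rw [hq'j]; exact htj.le) (by rw [hq'j, hq'i]; exact hcase)
            (by rw [hq'i]; exact hi.le) (by rw [hq'j, hq'i]; ring) hother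
          have hq'pos : ∀ l, 0 ≤ q' l := by
            intro l
            by_cases hlj : l = j
            · rw [hlj, hq'j]; linarith [hq j]
            · by_cases hli : l = i
              · rw [hli, hq'i]; exact hμ0
              · rw [hother l hlj hli]; exact hq l
          have hq'sum : ∑ l, q' l = s := by
            rw [sum_split hij q']
            have hrest : ∑ l ∈ (univ.erase i).erase j, q' l
                = ∑ l ∈ (univ.erase i).erase j, q l := by
              refine Finset.sum_congr rfl fun l hl => ?_
              have hl' := Finset.mem_erase.1 hl
              have hl'' := Finset.mem_erase.1 hl'.2
              exact hother l hl'.1 hl''.1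
            rw [hrest, hq'i, hq'j]
            have := sum_split hij q
            rw [this] at hqs
            linarith
          have hsub : univ.filter (fun l => q' l ≠ μ) ⊆ (univ.filter (fun l => q l ≠ μ)).erase i := by
            intro l hl
            have hlq := (Finset.mem_filter.1 hl).2
            have hli : l ≠ i := by
              intro h; rw [h, hq'i] at hlq; exact hlq rfl
            refine Finset.mem_erase.2 ⟨hli, Finset.mem_filter.2 ⟨Finset.mem_univ l, ?_⟩⟩
            by_cases hlj : l = j
            · rw [hlj]; exact (Finset.mem_filter.1 hjmem).2
            · rw [← hother l hlj hli]; exact hlq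
          have hq'card : (univ.filter (fun l => q' l ≠ μ)).card ≤ N := by
            have h1 := Finset.card_le_card hsub
            have h2 := Finset.card_erase_of_mem himem
            omega
          exact le_trans (ih q' hq'pos hq'sum hq'card)
            (htrans k ∅ (Finset.notMem_empty _) (Finset.notMem_empty _)).1
        · set q' : Fin n → ℝ := fun l => if l = j then μ else if l = i then t else q l with hq'
          have hq'j : q' j = μ := by simp [hq']
          have hq'i : q' i = t := by simp [hq', hij]
          have hother : ∀ l, l ≠ j → l ≠ i → q' l = q l := by
            intro l hlj hli; simp [hq', hlj, hli]
          have htrans := transfer n c q q' hq hsumle j i hij.symm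
            (by rw [hq'j]; exact hj.le) (by rw [hq'j, hq'i]; exact hcase)
            (by rw [hq'i]; exact hti.le) (by rw [hq'j, hq'i]; ring) hother
          have hq'pos : ∀ l, 0 ≤ q' l := by
            intro l
            by_cases hlj : l = j
            · rw [hlj, hq'j]; exact hμ0
            · by_cases hli : l = i
              · rw [hli, hq'i]; linarith [hq j]
              · rw [hother l hlj hli]; exact hq l
          have hq'sum : ∑ l, q' l = s := by
            rw [sum_split hij q']
            have hrest : ∑ l ∈ (univ.erase i).erase j, q' l
                = ∑ l ∈ (univ.erase i).erase j, q l := by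
              refine Finset.sum_congr rfl fun l hl => ?_
              have hl' := Finset.mem_erase.1 hl
              have hl'' := Finset.mem_erase.1 hl'.2
              exact hother l hl'.1 hl''.1
            rw [hrest, hq'i, hq'j]
            have := sum_split hij q
            rw [this] at hqs
            linarith
          have hsub : univ.filter (fun l => q' l ≠ μ) ⊆ (univ.filter (fun l => q l ≠ μ)).erase j := by
            intro l hl
            have hlq := (Finset.mem_filter.1 hl).2
            have hlj : l ≠ j := by
              intro h; rw [h, hq'j] at hlq; exact hlq rfl
            refine Finset.mem_erase.2 ⟨hlj, Finset.mem_filter.2 ⟨Finset.mem_univ l, ?_⟩⟩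
            by_cases hli : l = i
            · rw [hli]; exact (Finset.mem_filter.1 himem).2
            · rw [← hother l hlj hli]; exact hlq
          have hq'card : (univ.filter (fun l => q' l ≠ μ)).card ≤ N := by
            have h1 := Finset.card_le_card hsub
            have h2 := Finset.card_erase_of_mem hjmem
            omega
          exact le_trans (ih q' hq'pos hq'sum hq'card)
            (htrans k ∅ (Finset.notMem_empty _) (Finset.notMem_empty _)).1

lemma tailProb_eq (n c k : ℕ) (q : Fin n → ℝ) :
    tailProb n c k q = tauU n c q k ∅ := by
  rw [← ZU_eq n c q k ∅]
  unfold tailProb distinctCount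
  refine Finset.sum_congr rfl fun f _ => ?_
  rw [Finset.empty_union]

lemma tailProb0_eq (n c k : ℕ) (q : Fin n → ℝ) :
    tailProb0 n c k q = tau0 n c q k ∅ := by
  rw [← Z0_eq n c q k ∅]
  unfold tailProb0 nonnullCount
  refine Finset.sum_congr rfl fun f _ => ?_
  rw [Finset.empty_union]

/-- Theorem 3 of the paper: with `p_0 = 1 - ∑ pᵢ > 0`,
`T_{c,n}(u) ≤_st T_{c,n}(v) ≤_st T_{c,n}(p)`, where `u` is uniform and
`v_i = (1-p_0)/n` is the almost uniform distribution. -/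
theorem almost_uniform_minimizes (n : ℕ) (hn : 1 ≤ n) (p : Fin n → ℝ)
    (hp : ∀ i, p i ∈ Set.Ioo (0:ℝ) 1) (hsum : ∑ i, p i < 1)
    (c : ℕ) (hc : 1 ≤ c) (hcn : c ≤ n) (k : ℕ) :
    tailProb n c k (fun _ => 1 / n) ≤ tailProb0 n c k (fun _ => (∑ i, p i) / n) ∧
      tailProb0 n c k (fun _ => (∑ i, p i) / n) ≤ tailProb0 n c k p := by
  have hs0 : 0 ≤ ∑ i, p i := Finset.sum_nonneg fun i _ => (hp i).1.le
  have hs1 : ∑ i, p i ≤ 1 := hsum.le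
  constructor
  · rw [tailProb_eq, tailProb0_eq]
    have := uniform_le_almost n c hn (∑ i, p i) hs0 hs1 k ∅
    rwa [Finset.map_empty] at this
  · rw [tailProb0_eq, tailProb0_eq]
    exact schur n c hn (∑ i, p i) hs0 hs1 k n p (fun l => (hp l).1.le) rfl
      (le_trans (Finset.card_filter_le _ _) (by simp))
end

section
/- Fix $p_0 \in [0,1)$, $\theta \in (0, (1-p_0)/n]$, and let $\mathcal{A}_\theta = \{p \in (0,1)^n : \sum_i p_i = 1-p_0, \; p_j \geq \theta \text{ for all } j\}$. Let $\mathcal{B}_\theta \subseteq \mathcal{A}_\theta$ be the set of vectors with all entries equal to $\theta$ except one entry equal to $\gamma = 1 - p_0 - (n-1)\theta$. Then for every $p \in \mathcal{A}_\theta$, every $q \in \mathcal{B}_\theta$, and every $c \in \{1,\ldots,n\}$, $T_{c,n}(p) \leq_{st} T_{c,n}(q)$. -/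
open Finset

variable {n k : ℕ}

/-- merge map: sends `b` to `a`, identity elsewhere -/
def mrg {n : ℕ} (a b : Fin (n+1)) : Fin (n+1) → Fin (n+1) := fun x => if x = b then a else x

/-- The tail probability along the exchange line: coordinate `a` has prob `t`,
coordinate `b` has prob `s - t`, all other coupons have prob `w`. -/
noncomputable def Gfun (n c k : ℕ) (a b : Fin (n+1)) (w : Fin (n+1) → ℝ) (s t : ℝ) : ℝ :=
  ∑ f : Fin k → Fin (n+1), if nonnullCount f < c then
    ∏ i, (if f i = a then t else if f i = b then s - t else w (f i)) else 0

lemma convexOn_finsetSum {ι : Type*} (s : Finset ι) {t : Set ℝ} (ht : Convex ℝ t)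
    {f : ι → ℝ → ℝ} (hf : ∀ i ∈ s, ConvexOn ℝ t (f i)) :
    ConvexOn ℝ t (fun x => ∑ i ∈ s, f i x) := by
  classical
  induction s using Finset.cons_induction with
  | empty => simpa using convexOn_const 0 ht
  | cons i s hi ih =>
      simp only [Finset.sum_cons]
      exact (hf i (Finset.mem_cons_self _ _)).add (ih fun j hj => hf j (Finset.mem_cons_of_mem hj))

lemma convexOn_pow_Icc (s : ℝ) (m : ℕ) : ConvexOn ℝ (Set.Icc 0 s) (fun t : ℝ => t ^ m) :=
  (convexOn_pow m).subset (fun x hx => hx.1) (convex_Icc _ _)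

lemma convexOn_sub_pow (s : ℝ) (m : ℕ) : ConvexOn ℝ (Set.Icc 0 s) (fun t : ℝ => (s - t) ^ m) := by
  refine ⟨convex_Icc _ _, fun x hx y hy a b ha hb hab => ?_⟩
  have h1 : s - (a • x + b • y) = a • (s - x) + b • (s - y) := by
    simp only [smul_eq_mul]; linear_combination (-s) * hab
  simp only [h1]
  exact (convexOn_pow m).2 (Set.mem_Ici.2 (by linarith [hx.2])) (Set.mem_Ici.2 (by linarith [hy.2])) ha hb hab

lemma fiber_param (a b : Fin (n+1)) (h : Fin k → Fin (n+1))
    (hbh : ∀ i, h i ≠ b) (F : (Fin k → Fin (n+1)) → ℝ) :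
    ∑ f ∈ univ.filter (fun f => mrg a b ∘ f = h), F f
      = ∑ B ∈ (univ.filter (fun i => h i = a)).powerset,
          F (fun i => if i ∈ B then b else h i) := by
  refine Finset.sum_nbij' (fun f => univ.filter (fun i => f i = b))
      (fun B => fun i => if i ∈ B then b else h i) ?_ ?_ ?_ ?_ ?_
  · intro f hf
    simp only [mem_filter, mem_univ, true_and] at hf ⊢
    rw [mem_powerset]
    intro i hi
    simp only [mem_filter, mem_univ, true_and] at hi ⊢
    have := congrFun hf i
    simp only [Function.comp, mrg, hi, if_pos rfl] at this
    exact this.symm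
  · intro B hB
    simp only [mem_powerset] at hB
    simp only [mem_filter, mem_univ, true_and]
    funext i
    by_cases hiB : i ∈ B
    · have hia : h i = a := by
        have := hB hiB; simp only [mem_filter, mem_univ, true_and] at this; exact this
      simp [Function.comp, mrg, hiB, hia]
    · simp [Function.comp, mrg, hiB, hbh i]
  · intro f hf
    simp only [mem_filter, mem_univ, true_and] at hf
    funext i
    by_cases hib : f i = b
    · simp [mem_filter, hib]
    · simp only [mem_filter, mem_univ, true_and, hib, if_neg, if_false]
      have := congrFun hf i
      simp only [Function.comp, mrg, hib, if_neg] at this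
      exact this.symm
  · intro B hB
    simp only [mem_powerset] at hB
    ext i
    simp only [mem_filter, mem_univ, true_and]
    by_cases hiB : i ∈ B
    · simp [hiB]
    · simp [hiB, hbh i]
  · intro f hf
    congr 1
    simp only [mem_filter, mem_univ, true_and] at hf
    funext i
    by_cases hib : f i = b
    · simp [mem_filter, hib]
    · simp only [mem_filter, mem_univ, true_and, hib, if_false]
      have := congrFun hf i
      simp only [Function.comp, mrg, hib, if_neg] at this
      exact this

lemma prod_fB (a b : Fin (n+1)) (hab : a ≠ b) (w : Fin (n+1) → ℝ) (s t : ℝ)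
    (h : Fin k → Fin (n+1)) (hbh : ∀ i, h i ≠ b)
    (B : Finset (Fin k)) (hB : B ⊆ univ.filter (fun i => h i = a)) :
    (∏ i, (if (if i ∈ B then b else h i) = a then t
      else if (if i ∈ B then b else h i) = b then s - t else w (if i ∈ B then b else h i)))
    = (s - t) ^ B.card * t ^ ((univ.filter (fun i => h i = a)) \ B).card
        * ∏ i ∈ (univ.filter (fun i => h i = a))ᶜ, w (h i) := by
  set M := univ.filter (fun i => h i = a) with hM
  have h1 : ∀ i ∈ B, (if (if i ∈ B then b else h i) = a then t
      else if (if i ∈ B then b else h i) = b then s - t else w (if i ∈ B then b else h i)) = s - t := by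
    intro i hi; simp [hi, hab.symm]
  have h2 : ∀ i ∈ M \ B, (if (if i ∈ B then b else h i) = a then t
      else if (if i ∈ B then b else h i) = b then s - t else w (if i ∈ B then b else h i)) = t := by
    intro i hi
    rw [mem_sdiff] at hi
    have hia : h i = a := by have := hi.1; rw [hM, mem_filter] at this; exact this.2
    simp [hi.2, hia]
  have h3 : ∀ i ∈ Mᶜ, (if (if i ∈ B then b else h i) = a then t
      else if (if i ∈ B then b else h i) = b then s - t else w (if i ∈ B then b else h i)) = w (h i) := by
    intro i hi
    rw [mem_compl] at hi
    have hia : h i ≠ a := fun hc => hi (by rw [hM, mem_filter]; exact ⟨mem_univ i, hc⟩)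
    have hiB : i ∉ B := fun hc => hi (hB hc)
    simp [hiB, hia, hbh i]
  rw [← Finset.prod_mul_prod_compl M]
  rw [← Finset.prod_sdiff (show B ⊆ M from hB)]
  rw [Finset.prod_congr rfl h1, Finset.prod_congr rfl h2, Finset.prod_congr rfl h3,
    Finset.prod_const, Finset.prod_const]
  ring

lemma count_fB (a b : Fin (n+1)) (ha : a ≠ 0) (hb : b ≠ 0) (hab : a ≠ b)
    (h : Fin k → Fin (n+1)) (hbh : ∀ i, h i ≠ b)
    (B : Finset (Fin k)) (hB : B ⊆ univ.filter (fun i => h i = a)) :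
    nonnullCount (fun i => if i ∈ B then b else h i)
      = (((Finset.image h univ).erase 0).erase a).card
        + (if univ.filter (fun i => h i = a) ⊆ B then 0 else 1)
        + (if B = ∅ then 0 else 1) := by
  classical
  set M := univ.filter (fun i => h i = a) with hM
  set E := ((Finset.image h univ).erase 0).erase a with hE
  have hbE : b ∉ E := by
    intro hbe
    have : b ∈ Finset.image h univ := mem_of_mem_erase (mem_of_mem_erase hbe)
    obtain ⟨i, _, hi⟩ := mem_image.1 this
    exact hbh i hi
  have haE : a ∉ E := notMem_erase _ _
  have hkey : (Finset.image (fun i => if i ∈ B then b else h i) univ).erase 0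
      = (E ∪ (if M ⊆ B then ∅ else {a})) ∪ (if B = ∅ then ∅ else {b}) := by
    ext x
    simp only [mem_erase, mem_image, mem_union, mem_univ, true_and]
    constructor
    · rintro ⟨hx0, i, hfi⟩
      by_cases hiB : i ∈ B
      · rw [if_pos hiB] at hfi
        right
        rw [if_neg (ne_empty_of_mem hiB)]
        exact mem_singleton.2 hfi.symm
      · rw [if_neg hiB] at hfi
        left
        by_cases hxa : x = a
        · right
          have hiM : i ∈ M := by rw [hM, mem_filter]; exact ⟨mem_univ i, by rw [hfi, hxa]⟩
          rw [if_neg (fun hsub => hiB (hsub hiM))]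
          exact mem_singleton.2 hxa
        · left
          exact mem_erase.2 ⟨hxa, mem_erase.2 ⟨hx0, mem_image.2 ⟨i, mem_univ i, hfi⟩⟩⟩
    · rintro ((hx | hx) | hx)
      · obtain ⟨hxa, hx'⟩ := mem_erase.1 hx
        obtain ⟨hx0, hximg⟩ := mem_erase.1 hx'
        obtain ⟨i, _, hi⟩ := mem_image.1 hximg
        have hiB : i ∉ B := by
          intro hc
          have := hB hc
          rw [hM, mem_filter] at this
          exact hxa (by rw [← hi, this.2])
        exact ⟨hx0, i, by rw [if_neg hiB]; exact hi⟩
      · by_cases hsub : M ⊆ B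
        · rw [if_pos hsub] at hx; exact absurd hx (notMem_empty x)
        · rw [if_neg hsub] at hx
          have hxa : x = a := mem_singleton.1 hx
          obtain ⟨i, hiM, hiB⟩ := Finset.not_subset.1 hsub
          have hia : h i = a := by rw [hM, mem_filter] at hiM; exact hiM.2
          exact ⟨by rw [hxa]; exact ha, i, by rw [if_neg hiB, hia, hxa]⟩
      · by_cases hBe : B = ∅
        · rw [if_pos hBe] at hx; exact absurd hx (notMem_empty x)
        · rw [if_neg hBe] at hx
          have hxb : x = b := mem_singleton.1 hx
          obtain ⟨i, hiB⟩ := Finset.nonempty_iff_ne_empty.2 hBe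
          exact ⟨by rw [hxb]; exact hb, i, by rw [if_pos hiB, hxb]⟩
  have hdisj1 : Disjoint E (if M ⊆ B then ∅ else {a}) := by
    split_ifs <;> simp [haE]
  have hdisj2 : Disjoint (E ∪ (if M ⊆ B then ∅ else {a})) (if B = ∅ then ∅ else {b}) := by
    split_ifs with h1 h2 h3 <;> simp [hbE, Ne.symm hab]
  show ((Finset.image (fun i => if i ∈ B then b else h i) univ).erase 0).card = _
  rw [hkey, card_union_of_disjoint hdisj2, card_union_of_disjoint hdisj1]
  congr 1
  · congr 1
    split_ifs <;> simp
  · split_ifs <;> simp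

lemma fiber_convex (c : ℕ) (a b : Fin (n+1)) (ha : a ≠ 0) (hb : b ≠ 0) (hab : a ≠ b)
    (w : Fin (n+1) → ℝ) (hw : ∀ x, 0 ≤ w x) (s : ℝ) (h : Fin k → Fin (n+1)) :
    ConvexOn ℝ (Set.Icc 0 s) (fun t => ∑ f ∈ univ.filter (fun f => mrg a b ∘ f = h),
      if nonnullCount f < c then
        ∏ i, (if f i = a then t else if f i = b then s - t else w (f i)) else 0) := by
  classical
  by_cases hbh : ∀ i, h i ≠ b
  case neg =>
    have hempty : univ.filter (fun f : Fin k → Fin (n+1) => mrg a b ∘ f = h) = ∅ := by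
      rw [filter_eq_empty_iff]
      intro f _
      push_neg at hbh
      obtain ⟨i, hi⟩ := hbh
      intro hf
      have hfi := congrFun hf i
      simp only [Function.comp, mrg] at hfi
      rw [hi] at hfi
      split_ifs at hfi with hfb
      · exact hab hfi
      · exact hfb hfi
    simp only [hempty, Finset.sum_empty]
    exact convexOn_const 0 (convex_Icc _ _)
  case pos =>
    set M := univ.filter (fun i => h i = a) with hM
    set E := ((Finset.image h univ).erase 0).erase a with hE
    set C := ∏ i ∈ Mᶜ, w (h i) with hC
    have hC0 : 0 ≤ C := Finset.prod_nonneg fun i _ => hw _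
    have hrw : ∀ t : ℝ, (∑ f ∈ univ.filter (fun f => mrg a b ∘ f = h),
        if nonnullCount f < c then
          ∏ i, (if f i = a then t else if f i = b then s - t else w (f i)) else 0)
        = ∑ B ∈ M.powerset,
            if E.card + (if M ⊆ B then 0 else 1) + (if B = ∅ then 0 else 1) < c
            then (s - t) ^ B.card * t ^ (M \ B).card * C else 0 := by
      intro t
      rw [fiber_param a b h hbh (fun f => if nonnullCount f < c then
        ∏ i, (if f i = a then t else if f i = b then s - t else w (f i)) else 0)]
      refine Finset.sum_congr rfl fun B hB => ?_
      rw [mem_powerset] at hB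
      simp only
      rw [count_fB a b ha hb hab h hbh B hB, prod_fB a b hab w s t h hbh B hB]
    simp only [hrw]
    by_cases hMe : M = ∅
    · have : (fun t : ℝ => ∑ B ∈ M.powerset,
          if E.card + (if M ⊆ B then 0 else 1) + (if B = ∅ then 0 else 1) < c
          then (s - t) ^ B.card * t ^ (M \ B).card * C else 0)
          = fun _ : ℝ => if E.card < c then C else 0 := by
        funext t
        rw [hMe]
        simp
      rw [this]
      exact convexOn_const _ (convex_Icc _ _)
    · have hm : 0 < M.card := Finset.card_pos.2 (Finset.nonempty_iff_ne_empty.2 hMe)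
      by_cases h1 : c ≤ E.card + 1
      · have : (fun t : ℝ => ∑ B ∈ M.powerset,
            if E.card + (if M ⊆ B then 0 else 1) + (if B = ∅ then 0 else 1) < c
            then (s - t) ^ B.card * t ^ (M \ B).card * C else 0) = fun _ : ℝ => 0 := by
          funext t
          refine Finset.sum_eq_zero fun B hB => ?_
          rw [mem_powerset] at hB
          rw [if_neg]
          intro hcond
          by_cases hMB : M ⊆ B
          · have hBM : B = M := Finset.Subset.antisymm hB hMB
            have hBne : B ≠ ∅ := by rw [hBM]; exact hMe
            rw [if_pos hMB, if_neg hBne] at hcond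
            omega
          · rw [if_neg hMB] at hcond
            omega
        rw [this]
        exact convexOn_const 0 (convex_Icc _ _)
      · by_cases h2 : c = E.card + 2
        · have : (fun t : ℝ => ∑ B ∈ M.powerset,
              if E.card + (if M ⊆ B then 0 else 1) + (if B = ∅ then 0 else 1) < c
              then (s - t) ^ B.card * t ^ (M \ B).card * C else 0)
              = fun t : ℝ => C • t ^ M.card + C • (s - t) ^ M.card := by
            funext t
            have hsub : ({∅, M} : Finset (Finset (Fin k))) ⊆ M.powerset := by
              intro B hB
              rw [mem_insert, mem_singleton] at hB
              rw [mem_powerset]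
              rcases hB with hB | hB <;> rw [hB]
              exact Finset.empty_subset _
            rw [← Finset.sum_subset hsub]
            · have hne : (∅ : Finset (Fin k)) ≠ M := fun hc => hMe hc.symm
              rw [Finset.sum_pair hne]
              have hMne : ¬ M ⊆ (∅ : Finset (Fin k)) := fun hc => hMe (Finset.subset_empty.1 hc)
              rw [if_neg hMne, if_pos rfl, if_pos (Finset.Subset.refl M), if_neg hMe]
              rw [if_pos (by omega), if_pos (by omega)]
              simp only [card_empty, sdiff_empty, pow_zero, one_mul, Finset.sdiff_self,
                card_empty, mul_one, smul_eq_mul]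
              ring
            · intro B hB hBnot
              rw [mem_powerset] at hB
              rw [mem_insert, mem_singleton] at hBnot
              push_neg at hBnot
              rw [if_neg]
              intro hcond
              have hMB : ¬ M ⊆ B := fun hc => hBnot.2 (Finset.Subset.antisymm hB hc)
              rw [if_neg hMB, if_neg hBnot.1.ne_empty] at hcond
              omega
          rw [this]
          exact ((convexOn_pow_Icc s M.card).smul hC0).add ((convexOn_sub_pow s M.card).smul hC0)
        · -- E.card + 3 ≤ c : everything counts, sum is constant s^m * C
          have hge : E.card + 2 < c := by omega
          have : (fun t : ℝ => ∑ B ∈ M.powerset,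
              if E.card + (if M ⊆ B then 0 else 1) + (if B = ∅ then 0 else 1) < c
              then (s - t) ^ B.card * t ^ (M \ B).card * C else 0)
              = fun _ : ℝ => s ^ M.card * C := by
            funext t
            have hall : ∀ B ∈ M.powerset,
                (if E.card + (if M ⊆ B then 0 else 1) + (if B = ∅ then 0 else 1) < c
                then (s - t) ^ B.card * t ^ (M \ B).card * C else 0)
                = (s - t) ^ B.card * t ^ (M \ B).card * C := by
              intro B _
              rw [if_pos]
              split_ifs <;> omega
            rw [Finset.sum_congr rfl hall, ← Finset.sum_mul]
            congr 1
            have hpa := Finset.prod_add (fun _ : Fin k => s - t) (fun _ : Fin k => t) M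
            simp only [Finset.prod_const] at hpa
            rw [sub_add_cancel] at hpa
            rw [← hpa]
          rw [this]
          exact convexOn_const _ (convex_Icc _ _)

lemma Gfun_convex (c : ℕ) (a b : Fin (n+1)) (ha : a ≠ 0) (hb : b ≠ 0) (hab : a ≠ b)
    (w : Fin (n+1) → ℝ) (hw : ∀ x, 0 ≤ w x) (s : ℝ) :
    ConvexOn ℝ (Set.Icc 0 s) (Gfun n c k a b w s) := by
  classical
  have hG : Gfun n c k a b w s = fun t => ∑ h : Fin k → Fin (n+1),
      ∑ f ∈ univ.filter (fun f => mrg a b ∘ f = h),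
        (if nonnullCount f < c then
          ∏ i, (if f i = a then t else if f i = b then s - t else w (f i)) else 0) := by
    funext t
    rw [Gfun]
    rw [← Finset.sum_fiberwise univ (fun f : Fin k → Fin (n+1) => mrg a b ∘ f)
      (fun f => if nonnullCount f < c then
        ∏ i, (if f i = a then t else if f i = b then s - t else w (f i)) else 0)]
  rw [hG]
  exact convexOn_finsetSum univ (convex_Icc _ _)
    (fun h _ => fiber_convex c a b ha hb hab w hw s h)

lemma Gfun_symm (c : ℕ) (a b : Fin (n+1)) (ha : a ≠ 0) (hb : b ≠ 0) (hab : a ≠ b)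
    (w : Fin (n+1) → ℝ) (s t : ℝ) :
    Gfun n c k a b w s (s - t) = Gfun n c k a b w s t := by
  classical
  rw [Gfun, Gfun]
  refine Fintype.sum_equiv (Equiv.arrowCongr (Equiv.refl (Fin k)) (Equiv.swap a b)) _ _ ?_
  intro f
  have he : ((Equiv.refl (Fin k)).arrowCongr (Equiv.swap a b)) f
      = fun i => Equiv.swap a b (f i) := rfl
  rw [he]
  have hcount : nonnullCount (fun i => Equiv.swap a b (f i)) = nonnullCount f := by
    rw [nonnullCount, nonnullCount]
    have himg : Finset.image (fun i => Equiv.swap a b (f i)) univ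
        = (Finset.image f univ).image (Equiv.swap a b) := by
      rw [Finset.image_image]; rfl
    rw [himg]
    have h0 : Equiv.swap a b 0 = 0 :=
      Equiv.swap_apply_of_ne_of_ne (Ne.symm ha) (Ne.symm hb)
    rw [← h0, ← Finset.image_erase (Equiv.swap a b).injective]
    rw [Finset.card_image_of_injective _ (Equiv.swap a b).injective, h0]
  have hprod : ∀ i : Fin k,
      (if f i = a then s - t else if f i = b then s - (s - t) else w (f i))
      = (if Equiv.swap a b (f i) = a then t
          else if Equiv.swap a b (f i) = b then s - t else w (Equiv.swap a b (f i))) := by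
    intro i
    by_cases hfa : f i = a
    · simp [hfa, Equiv.swap_apply_left, Ne.symm hab]
    · by_cases hfb : f i = b
      · simp only [hfb, Equiv.swap_apply_right, if_neg (Ne.symm hab), if_pos rfl]
        rw [if_neg hab] at *
        ring_nf
        simp [sub_sub_cancel]
      · rw [Equiv.swap_apply_of_ne_of_ne hfa hfb]
        simp [hfa, hfb]
  rw [hcount]
  split_ifs with hN
  · exact Finset.prod_congr rfl fun i _ => hprod i
  · rfl

lemma exchange (n c k : ℕ) (θ : ℝ) (hθ : 0 < θ) (p : Fin n → ℝ) (hsum : ∑ l, p l ≤ 1)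
    (hpθ : ∀ l, θ ≤ p l) (i j : Fin n) (hij : i ≠ j) :
    tailProb0 n c k p ≤ tailProb0 n c k
      (Function.update (Function.update p i θ) j (p j + p i - θ)) := by
  classical
  set s := p i + p j with hs
  set a := Fin.succ i with hadef
  set b := Fin.succ j with hbdef
  have hab : a ≠ b := fun hc => hij (Fin.succ_injective n hc)
  have ha : a ≠ 0 := Fin.succ_ne_zero i
  have hb : b ≠ 0 := Fin.succ_ne_zero j
  set w := fullDist p with hwdef
  have hw : ∀ x, 0 ≤ w x := by
    intro x
    refine Fin.cases ?_ ?_ x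
    · show (0:ℝ) ≤ 1 - ∑ l, p l; linarith
    · intro l; show (0:ℝ) ≤ p l; linarith [hpθ l]
  have hbridge : ∀ t : ℝ, tailProb0 n c k (Function.update (Function.update p i t) j (s - t))
      = Gfun n c k a b w s t := by
    intro t
    have hfd : ∀ x, fullDist (Function.update (Function.update p i t) j (s - t)) x
        = (if x = a then t else if x = b then s - t else w x) := by
      intro x
      refine Fin.cases ?_ ?_ x
      · rw [if_neg (Ne.symm ha), if_neg (Ne.symm hb)]
        show 1 - ∑ l, Function.update (Function.update p i t) j (s - t) l = w 0
        have e1 : ∑ l, Function.update (Function.update p i t) j (s - t) l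
            = (s - t) + ∑ l ∈ univ \ {j}, Function.update p i t l :=
          Finset.sum_update_of_mem (mem_univ j) _ _
        have hi' : i ∈ univ \ {j} := by simp [hij]
        have e2 : ∑ l ∈ univ \ {j}, Function.update p i t l
            = t + ∑ l ∈ (univ \ {j}) \ {i}, p l := Finset.sum_update_of_mem hi' _ _
        have e3 : ∑ l, p l = p j + ∑ l ∈ univ \ {j}, p l := by
          conv_lhs => rw [← Function.update_eq_self j p]
          exact Finset.sum_update_of_mem (mem_univ j) _ _
        have e4 : ∑ l ∈ univ \ {j}, p l = p i + ∑ l ∈ (univ \ {j}) \ {i}, p l := by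
          conv_lhs => rw [← Function.update_eq_self i p]
          exact Finset.sum_update_of_mem hi' _ _
        have hw0 : w 0 = 1 - ∑ l, p l := rfl
        rw [e1, e2, hw0, e3, e4, hs]
        ring
      · intro l
        show Function.update (Function.update p i t) j (s - t) l = _
        by_cases hlj : l = j
        · subst hlj
          rw [Function.update_self, if_neg (Ne.symm hab), if_pos rfl]
        · rw [Function.update_of_ne hlj]
          by_cases hli : l = i
          · subst hli
            rw [Function.update_self, if_pos rfl]
          · rw [Function.update_of_ne hli]
            have hna : Fin.succ l ≠ a := fun hc => hli (Fin.succ_injective n hc)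
            have hnb : Fin.succ l ≠ b := fun hc => hlj (Fin.succ_injective n hc)
            rw [if_neg hna, if_neg hnb]
            rfl
    rw [tailProb0, Gfun]
    refine Finset.sum_congr rfl fun f _ => ?_
    split_ifs with h
    · exact Finset.prod_congr rfl fun x _ => hfd (f x)
    · rfl
  have hpi := hpθ i
  have hpj := hpθ j
  have hθs : θ ≤ s - θ := by rw [hs]; linarith
  have hθmem : θ ∈ Set.Icc (0:ℝ) s := ⟨le_of_lt hθ, by rw [hs]; linarith⟩
  have hsθmem : s - θ ∈ Set.Icc (0:ℝ) s := ⟨by rw [hs]; linarith, by linarith⟩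
  have hpimem : p i ∈ segment ℝ θ (s - θ) := by
    rw [segment_eq_Icc hθs]
    exact ⟨hpθ i, by rw [hs]; linarith⟩
  have hle := (Gfun_convex (k := k) c a b ha hb hab w hw s).le_on_segment hθmem hsθmem hpimem
  have hpeq : Function.update (Function.update p i (p i)) j (s - p i) = p := by
    rw [Function.update_eq_self i p, show s - p i = p j from by rw [hs]; ring,
      Function.update_eq_self]
  have htgt : Function.update (Function.update p i θ) j (p j + p i - θ)
      = Function.update (Function.update p i θ) j (s - θ) := by
    rw [show p j + p i - θ = s - θ from by rw [hs]; ring]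
  calc tailProb0 n c k p = Gfun n c k a b w s (p i) := by
        conv_lhs => rw [← hpeq]
        exact hbridge (p i)
    _ ≤ max (Gfun n c k a b w s θ) (Gfun n c k a b w s (s - θ)) := hle
    _ = Gfun n c k a b w s θ := by
        rw [Gfun_symm c a b ha hb hab w s θ]; exact max_self _
    _ = tailProb0 n c k (Function.update (Function.update p i θ) j (p j + p i - θ)) := by
        rw [htgt, hbridge θ]

/-- Theorem 4 of the paper: on `𝒜_θ = {p : ∑ pᵢ = 1 - p₀, pᵢ ≥ θ}`, the collection
time is stochastically maximized by the distributions `q ∈ ℬ_θ` having all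
entries equal to `θ` except one equal to `γ = 1 - p₀ - (n-1)θ`. -/
theorem extreme_maximizes (n : ℕ) (hn : 1 ≤ n) (p0 θ : ℝ)
    (hp0 : 0 ≤ p0) (hp01 : p0 < 1) (hθ : 0 < θ) (hθ2 : θ ≤ (1 - p0) / n)
    (p : Fin n → ℝ) (hp : ∀ i, p i ∈ Set.Ioo (0:ℝ) 1) (hpsum : ∑ i, p i = 1 - p0)
    (hpθ : ∀ i, θ ≤ p i)
    (q : Fin n → ℝ) (j : Fin n) (hqj : q j = 1 - p0 - (n - 1) * θ)
    (hq : ∀ i, i ≠ j → q i = θ)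
    (c : ℕ) (hc : 1 ≤ c) (hcn : c ≤ n) (k : ℕ) :
    tailProb0 n c k p ≤ tailProb0 n c k q := by
  classical
  have key : ∀ N (r : Fin n → ℝ), (∑ l, r l = 1 - p0) → (∀ l, θ ≤ r l) →
      (univ.filter (fun l => l ≠ j ∧ r l ≠ θ)).card ≤ N →
      tailProb0 n c k r ≤ tailProb0 n c k q := by
    intro N
    induction N with
    | zero =>
      intro r hsum hθr hcard
      have hempty : univ.filter (fun l => l ≠ j ∧ r l ≠ θ) = ∅ :=
        card_eq_zero.1 (Nat.le_zero.1 hcard)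
      have hall : ∀ l, l ≠ j → r l = θ := by
        intro l hl
        by_contra hne
        have hmem : l ∈ univ.filter (fun l => l ≠ j ∧ r l ≠ θ) :=
          mem_filter.2 ⟨mem_univ l, hl, hne⟩
        rw [hempty] at hmem
        exact absurd hmem (notMem_empty l)
      have hre : r = q := by
        funext l
        by_cases hlj : l = j
        · subst hlj
          have e3 : ∑ l, r l = r l + ∑ x ∈ univ \ {l}, r x := by
            conv_lhs => rw [← Function.update_eq_self l r]
            exact Finset.sum_update_of_mem (mem_univ l) _ _
          have hconst : ∑ x ∈ univ \ {l}, r x = ((n - 1 : ℕ) : ℝ) * θ := by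
            rw [Finset.sum_congr rfl (fun x hx => hall x (by
              rw [mem_sdiff, mem_singleton] at hx; exact hx.2))]
            rw [Finset.sum_const, nsmul_eq_mul]
            congr 2
            rw [Finset.card_sdiff_of_subset (by simp), card_univ, Fintype.card_fin, card_singleton]
          have hcast : ((n - 1 : ℕ) : ℝ) = (n : ℝ) - 1 := by
            rw [Nat.cast_sub hn, Nat.cast_one]
          rw [hqj]
          rw [hsum, hconst, hcast] at e3
          linarith
        · rw [hall l hlj, hq l hlj]
      rw [hre]
    | succ N ih =>
      intro r hsum hθr hcard
      rcases Finset.eq_empty_or_nonempty (univ.filter (fun l => l ≠ j ∧ r l ≠ θ)) with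
        he | ⟨i, hi⟩
      · exact ih r hsum hθr (by rw [he]; simp)
      · obtain ⟨-, hij, hri⟩ := mem_filter.1 hi
        have hsum1 : ∑ l, r l ≤ 1 := by rw [hsum]; linarith
        have hstep := exchange n c k θ hθ r hsum1 hθr i j hij
        set r' := Function.update (Function.update r i θ) j (r j + r i - θ) with hr'
        have hr'j : r' j = r j + r i - θ := Function.update_self _ _ _
        have hr'i : r' i = θ := by
          rw [hr', Function.update_of_ne hij, Function.update_self]
        have hr'other : ∀ l, l ≠ i → l ≠ j → r' l = r l := by
          intro l hli hlj
          rw [hr', Function.update_of_ne hlj, Function.update_of_ne hli]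
        have hi' : i ∈ univ \ ({j} : Finset (Fin n)) := by simp [hij]
        have e1 : ∑ l, r' l = (r j + r i - θ) + ∑ l ∈ univ \ {j}, Function.update r i θ l :=
          Finset.sum_update_of_mem (mem_univ j) _ _
        have e2 : ∑ l ∈ univ \ {j}, Function.update r i θ l
            = θ + ∑ l ∈ (univ \ {j}) \ {i}, r l := Finset.sum_update_of_mem hi' _ _
        have e3 : ∑ l, r l = r j + ∑ l ∈ univ \ {j}, r l := by
          conv_lhs => rw [← Function.update_eq_self j r]
          exact Finset.sum_update_of_mem (mem_univ j) _ _
        have e4 : ∑ l ∈ univ \ {j}, r l = r i + ∑ l ∈ (univ \ {j}) \ {i}, r l := by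
          conv_lhs => rw [← Function.update_eq_self i r]
          exact Finset.sum_update_of_mem hi' _ _
        have hsum' : ∑ l, r' l = 1 - p0 := by
          rw [e1, e2]
          rw [e3, e4] at hsum
          linarith
        have hθr' : ∀ l, θ ≤ r' l := by
          intro l
          by_cases hlj : l = j
          · rw [hlj, hr'j]; linarith [hθr j, hθr i]
          · by_cases hli : l = i
            · subst hli; rw [hr'i]
            · rw [hr'other l hli hlj]; exact hθr l
        have hcard' : (univ.filter (fun l => l ≠ j ∧ r' l ≠ θ)).card ≤ N := by
          have hsubset : univ.filter (fun l => l ≠ j ∧ r' l ≠ θ)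
              ⊆ (univ.filter (fun l => l ≠ j ∧ r l ≠ θ)).erase i := by
            intro l hl
            obtain ⟨-, hlj, hlne⟩ := mem_filter.1 hl
            have hli : l ≠ i := by rintro rfl; exact hlne hr'i
            refine mem_erase.2 ⟨hli, mem_filter.2 ⟨mem_univ l, hlj, ?_⟩⟩
            rw [← hr'other l hli hlj]
            exact hlne
          have h1 := card_le_card hsubset
          have h2 := card_erase_of_mem hi
          omega
        exact le_trans hstep (ih r' hsum' hθr' hcard')
  exact key _ p hpsum hpθ le_rfl
end

section
/- For probability vectors $p$ on $\{1,\ldots,n\}$ (with $p_0 = 0$) and the uniform distribution $u = (1/n,\ldots,1/n)$, the expected collection times satisfy $\mathbb{E}[T_{c,n}(u)] \leq \mathbb{E}[T_{c,n}(p)]$ for every $c \in \{1,\ldots,n\}$. -/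
open Finset

lemma pow_mix_le_s16 {x y a : ℝ} (hx : 0 ≤ x) (hy : 0 ≤ y) (ha : 0 ≤ a) (ha1 : a ≤ 1) (m : ℕ) :
    (a * x + (1 - a) * y) ^ m + ((1 - a) * x + a * y) ^ m ≤ x ^ m + y ^ m := by
  have h1 := (convexOn_pow (𝕜 := ℝ) m).2 (Set.mem_Ici.2 hx) (Set.mem_Ici.2 hy) ha
    (by linarith : (0:ℝ) ≤ 1 - a) (by ring)
  have h2 := (convexOn_pow (𝕜 := ℝ) m).2 (Set.mem_Ici.2 hx) (Set.mem_Ici.2 hy)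
    (by linarith : (0:ℝ) ≤ 1 - a) ha (by ring)
  simp only [smul_eq_mul] at h1 h2
  linarith

lemma tailProb_pair_le (n c k : ℕ) (p q : Fin n → ℝ) (hp0 : ∀ l, 0 ≤ p l)
    (i j : Fin n) (hij : i ≠ j) (a : ℝ) (ha : 0 ≤ a) (ha1 : a ≤ 1)
    (hqi : q i = a * p i + (1 - a) * p j) (hqj : q j = (1 - a) * p i + a * p j)
    (hq : ∀ l, l ≠ i → l ≠ j → q l = p l) :
    tailProb n c k q ≤ tailProb n c k p := by
  classical
  set Φ : (Fin k → Fin n) → (Fin k → Fin n) := fun f t => if f t = j then i else f t with hΦ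
  have hfib : ∀ r : Fin n → ℝ, tailProb n c k r =
      ∑ g : Fin k → Fin n, ∑ f ∈ univ.filter (fun f => Φ f = g),
        (if distinctCount f < c then ∏ t, r (f t) else 0) := by
    intro r
    rw [tailProb, ← Finset.sum_fiberwise_of_maps_to (g := Φ) (fun f _ => mem_univ (Φ f))]
  rw [hfib p, hfib q]
  apply Finset.sum_le_sum
  intro g _
  by_cases hg : ∀ t, g t ≠ j
  swap
  · -- fiber is empty
    push_neg at hg
    obtain ⟨t0, ht0⟩ := hg
    have hemp : univ.filter (fun f => Φ f = g) = ∅ := by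
      rw [Finset.filter_eq_empty_iff]
      intro f _ hf
      have h := congrFun hf t0
      simp only [hΦ] at h
      by_cases hft : f t0 = j
      · rw [if_pos hft] at h
        exact hij (h.trans ht0)
      · rw [if_neg hft] at h
        exact hft (h.trans ht0)
    rw [hemp]; simp
  · -- main case: g avoids j
    set M : Finset (Fin k) := univ.filter (fun t => g t = i) with hM
    set sb : Finset (Fin k) → (Fin k → Fin n) := fun S t => if t ∈ S then j else g t with hsb
    have hre : ∀ r : Fin n → ℝ,
        ∑ f ∈ univ.filter (fun f => Φ f = g),
          (if distinctCount f < c then ∏ t, r (f t) else 0)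
        = ∑ S ∈ M.powerset,
          (if distinctCount (sb S) < c then ∏ t, r (sb S t) else 0) := by
      intro r
      have hback : ∀ f, Φ f = g → sb (univ.filter (fun t => f t = j)) = f := by
        intro f hf
        funext t
        by_cases ht : f t = j
        · have htm : t ∈ univ.filter (fun t => f t = j) := by
            rw [mem_filter]; exact ⟨mem_univ _, ht⟩
          simp only [hsb, if_pos htm]
          exact ht.symm
        · have htm : t ∉ univ.filter (fun t => f t = j) := by
            rw [mem_filter]; rintro ⟨-, hc⟩; exact ht hc
          simp only [hsb, if_neg htm]
          have h := congrFun hf t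
          simp only [hΦ, if_neg ht] at h
          exact h.symm
      refine Finset.sum_nbij' (fun f => univ.filter (fun t => f t = j)) sb ?_ ?_ ?_ ?_ ?_
      · intro f hf
        simp only [mem_filter, mem_univ, true_and] at hf
        rw [mem_powerset]
        intro t ht
        rw [mem_filter] at ht
        rw [hM, mem_filter]
        refine ⟨mem_univ _, ?_⟩
        have h := congrFun hf t
        simp only [hΦ, if_pos ht.2] at h
        exact h.symm
      · intro S hS
        rw [mem_powerset] at hS
        simp only [mem_filter, mem_univ, true_and]
        funext t
        by_cases ht : t ∈ S
        · have h2 : g t = i := by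
            have := hS ht
            rw [hM, mem_filter] at this
            exact this.2
          simp only [hΦ, hsb, if_pos ht, if_pos rfl]
          exact h2.symm
        · simp only [hΦ, hsb, if_neg ht, if_neg (hg t)]
      · intro f hf
        simp only [mem_filter, mem_univ, true_and] at hf
        exact hback f hf
      · intro S hS
        rw [mem_powerset] at hS
        ext t
        simp only [mem_filter, mem_univ, true_and, hsb]
        constructor
        · intro ht
          by_cases h : t ∈ S
          · exact h
          · rw [if_neg h] at ht; exact absurd ht (hg t)
        · intro h; rw [if_pos h]
      · intro f hf
        simp only [mem_filter, mem_univ, true_and] at hf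
        rw [hback f hf]
    rw [hre p, hre q]
    -- product formula
    have hprod : ∀ (r : Fin n → ℝ) (S : Finset (Fin k)), S ⊆ M →
        ∏ t, r (sb S t)
          = r j ^ S.card * (r i ^ (M \ S).card * ∏ t ∈ univ \ M, r (g t)) := by
      intro r S hS
      rw [← Finset.prod_sdiff (subset_univ M), ← Finset.prod_sdiff hS]
      have e1 : ∏ t ∈ univ \ M, r (sb S t) = ∏ t ∈ univ \ M, r (g t) := by
        apply Finset.prod_congr rfl
        intro t ht
        simp only [mem_sdiff] at ht
        have : t ∉ S := fun h => ht.2 (hS h)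
        simp [hsb, this]
      have e2 : ∏ t ∈ M \ S, r (sb S t) = r i ^ (M \ S).card := by
        rw [← Finset.prod_const]
        apply Finset.prod_congr rfl
        intro t ht
        simp only [mem_sdiff] at ht
        have hgt : g t = i := by have := ht.1; simp only [hM, mem_filter] at this; exact this.2
        simp [hsb, ht.2, hgt]
      have e3 : ∏ t ∈ S, r (sb S t) = r j ^ S.card := by
        rw [← Finset.prod_const]
        apply Finset.prod_congr rfl
        intro t ht
        simp [hsb, ht]
      rw [e1, e2, e3]; ring
    have hRq : ∏ t ∈ univ \ M, q (g t) = ∏ t ∈ univ \ M, p (g t) := by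
      apply Finset.prod_congr rfl
      intro t ht
      simp only [mem_sdiff, hM, mem_filter, mem_univ, true_and] at ht
      exact hq _ ht (hg t)
    have hR0 : 0 ≤ ∏ t ∈ univ \ M, p (g t) := Finset.prod_nonneg fun t _ => hp0 _
    by_cases hMe : M = ∅
    · -- no i-slots: everything equal
      apply le_of_eq
      rw [hMe]
      rw [Finset.powerset_empty, Finset.sum_singleton, Finset.sum_singleton]
      have hgg : sb ∅ = g := by funext t; simp [hsb]
      rw [hgg]
      congr 1
      apply Finset.prod_congr rfl
      intro t _
      have hgi : g t ≠ i := by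
        intro h
        have : t ∈ M := by simp [hM, h]
        simp [hMe] at this
      exact hq _ hgi (hg t)
    · have hMne : M.Nonempty := Finset.nonempty_iff_ne_empty.2 hMe
      set D : Finset (Fin n) := image g univ with hD
      set e : ℕ := (D.erase i).card with he
      have hjD : j ∉ D := by
        simp only [hD, mem_image]
        rintro ⟨t, -, ht⟩
        exact hg t ht
      have hiD : i ∈ D := by
        obtain ⟨t0, ht0⟩ := hMne
        simp only [hM, mem_filter] at ht0
        exact mem_image.2 ⟨t0, mem_univ _, ht0.2⟩
      have hcardD : D.card = e + 1 := (Finset.card_erase_add_one hiD).symm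
      -- distinct counts
      have hdc0 : distinctCount (sb ∅) = e + 1 := by
        have hgg : sb ∅ = g := by funext t; simp [hsb]
        rw [hgg, distinctCount, ← hD, hcardD]
      have hdcM : distinctCount (sb M) = e + 1 := by
        have himg : image (sb M) univ = insert j (D.erase i) := by
          ext v
          simp only [mem_image, mem_insert, mem_erase, hsb]
          constructor
          · rintro ⟨t, -, ht⟩
            by_cases h : t ∈ M
            · rw [if_pos h] at ht; exact Or.inl ht.symm
            · rw [if_neg h] at ht
              have : g t ≠ i := by
                intro hc; exact h (by simp [hM, hc])
              exact Or.inr ⟨by rw [← ht]; exact this, mem_image.2 ⟨t, mem_univ _, ht⟩⟩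
          · rintro (rfl | ⟨hvi, hv⟩)
            · obtain ⟨t0, ht0⟩ := hMne
              exact ⟨t0, mem_univ _, by rw [if_pos ht0]⟩
            · obtain ⟨t, -, ht⟩ := mem_image.1 hv
              refine ⟨t, mem_univ _, ?_⟩
              have : t ∉ M := by
                intro hc
                simp only [hM, mem_filter] at hc
                exact hvi (by rw [← ht, hc.2])
              rw [if_neg this, ht]
        rw [distinctCount, himg, Finset.card_insert_of_notMem (by simp [hjD, mem_erase])]
      have hdcS : ∀ S, S ⊆ M → S ≠ ∅ → S ≠ M → distinctCount (sb S) = e + 2 := by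
        intro S hS hS0 hSM
        have hSne : S.Nonempty := Finset.nonempty_iff_ne_empty.2 hS0
        obtain ⟨tM, htM, htS⟩ : ∃ t, t ∈ M ∧ t ∉ S := by
          by_contra hcon
          push_neg at hcon
          exact hSM (Finset.Subset.antisymm hS hcon)
        have himg : image (sb S) univ = insert j D := by
          ext v
          simp only [mem_image, mem_insert, hsb]
          constructor
          · rintro ⟨t, -, ht⟩
            by_cases h : t ∈ S
            · rw [if_pos h] at ht; exact Or.inl ht.symm
            · rw [if_neg h] at ht; exact Or.inr (mem_image.2 ⟨t, mem_univ _, ht⟩)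
          · rintro (rfl | hv)
            · obtain ⟨t0, ht0⟩ := hSne
              exact ⟨t0, mem_univ _, by rw [if_pos ht0]⟩
            · obtain ⟨t, -, ht⟩ := mem_image.1 hv
              by_cases h : t ∈ S
              · -- then g t could be i; use tM instead if v = i... g t = i since t ∈ S ⊆ M
                have hgt : g t = i := by
                  have := hS h; simp only [hM, mem_filter] at this; exact this.2
                have hgm : g tM = i := by
                  simp only [hM, mem_filter] at htM; exact htM.2
                refine ⟨tM, mem_univ _, ?_⟩
                rw [if_neg htS, hgm, ← hgt, ht]
              · exact ⟨t, mem_univ _, by rw [if_neg h, ht]⟩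
        rw [distinctCount, himg, Finset.card_insert_of_notMem hjD, hcardD]
      -- case analysis on c
      rcases lt_trichotomy c (e + 2) with hc1 | hc2 | hc3
      · -- c ≤ e + 1 : all terms vanish
        have hz : ∀ r : Fin n → ℝ, ∑ S ∈ M.powerset,
            (if distinctCount (sb S) < c then ∏ t, r (sb S t) else 0) = 0 := by
          intro r
          apply Finset.sum_eq_zero
          intro S hS
          rw [mem_powerset] at hS
          rw [if_neg]
          by_cases h0 : S = ∅
          · rw [h0, hdc0]; omega
          · by_cases hSM : S = M
            · rw [hSM, hdcM]; omega
            · rw [hdcS S hS h0 hSM]; omega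
        rw [hz p, hz q]
      · -- c = e + 2 : only ∅ and M survive
        have hcalc : ∀ r : Fin n → ℝ, ∑ S ∈ M.powerset,
            (if distinctCount (sb S) < c then ∏ t, r (sb S t) else 0)
            = (r i ^ M.card + r j ^ M.card) * ∏ t ∈ univ \ M, r (g t) := by
          intro r
          rw [Finset.sum_eq_add (∅ : Finset (Fin k)) M
            (fun h => hMe h.symm)
            (fun S hS hSne => by
              rw [mem_powerset] at hS
              rw [if_neg]
              rw [hdcS S hS hSne.1 hSne.2, hc2]; omega)
            (fun h => absurd (Finset.empty_mem_powerset M) h)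
            (fun h => absurd (Finset.mem_powerset_self M) h)]
          rw [if_pos (by rw [hdc0, hc2]; omega), if_pos (by rw [hdcM, hc2]; omega)]
          rw [hprod r ∅ (Finset.empty_subset M), hprod r M (Finset.Subset.refl M)]
          simp only [Finset.card_empty, Finset.sdiff_empty, Finset.sdiff_self,
            Finset.card_empty, pow_zero]
          ring
        rw [hcalc p, hcalc q, hRq]
        apply mul_le_mul_of_nonneg_right _ hR0
        rw [hqi, hqj]
        have := pow_mix_le_s16 (hp0 i) (hp0 j) ha ha1 M.card
        linarith
      · -- e + 2 < c : all terms survive; total is symmetric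
        have hcalc : ∀ r : Fin n → ℝ, ∑ S ∈ M.powerset,
            (if distinctCount (sb S) < c then ∏ t, r (sb S t) else 0)
            = (r j + r i) ^ M.card * ∏ t ∈ univ \ M, r (g t) := by
          intro r
          have hall : ∀ S ∈ M.powerset,
              (if distinctCount (sb S) < c then ∏ t, r (sb S t) else 0)
              = r j ^ S.card * r i ^ (M \ S).card * ∏ t ∈ univ \ M, r (g t) := by
            intro S hS
            rw [mem_powerset] at hS
            rw [if_pos, hprod r S hS]
            · ring
            · by_cases h0 : S = ∅
              · rw [h0, hdc0]; omega
              · by_cases hSM : S = M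
                · rw [hSM, hdcM]; omega
                · rw [hdcS S hS h0 hSM]; omega
          rw [Finset.sum_congr rfl hall]
          rw [← Finset.sum_mul]
          congr 1
          have hpp : ∀ S ∈ M.powerset,
              r j ^ S.card * r i ^ (M \ S).card
              = (∏ _t ∈ S, r j) * ∏ _t ∈ M \ S, r i := by
            intro S _
            rw [Finset.prod_const, Finset.prod_const]
          rw [Finset.sum_congr rfl hpp, ← Finset.prod_add, Finset.prod_const]
        rw [hcalc p, hcalc q, hRq]
        apply le_of_eq
        congr 2
        rw [hqi, hqj]; ring

lemma uniform_le_tailProb (n c k : ℕ) :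
    ∀ N : ℕ, ∀ p : Fin n → ℝ, (univ.filter (fun l => p l ≠ 1 / (n:ℝ))).card ≤ N →
    (∀ l, 0 ≤ p l) → ∑ l, p l = 1 →
    tailProb n c k (fun _ => 1 / (n:ℝ)) ≤ tailProb n c k p := by
  intro N
  induction N with
  | zero =>
    intro p hcard hp0 hsum
    have hall : ∀ l, p l = 1 / (n:ℝ) := by
      intro l
      by_contra h
      have hmem : l ∈ univ.filter (fun l => p l ≠ 1 / (n:ℝ)) := by
        rw [mem_filter]; exact ⟨mem_univ _, h⟩
      have := Finset.card_pos.2 ⟨l, hmem⟩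
      omega
    rw [show p = fun _ => 1 / (n:ℝ) from funext hall]
  | succ N ih =>
    intro p hcard hp0 hsum
    by_cases hall : ∀ l, p l = 1 / (n:ℝ)
    · rw [show p = fun _ => 1 / (n:ℝ) from funext hall]
    · push_neg at hall
      obtain ⟨l0, hl0⟩ := hall
      have hn' : n ≠ 0 := by
        rintro rfl
        exact l0.elim0
      have hn0 : (n:ℝ) ≠ 0 := Nat.cast_ne_zero.2 hn'
      have husum : ∑ _l : Fin n, (1 / (n:ℝ)) = 1 := by
        rw [Finset.sum_const, card_univ, Fintype.card_fin, nsmul_eq_mul]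
        field_simp
      have hexj : ∃ jj, p jj < 1 / (n:ℝ) := by
        by_contra hno
        push_neg at hno
        have hl0' : 1 / (n:ℝ) < p l0 := lt_of_le_of_ne (hno l0) (Ne.symm hl0)
        have h1 : (1:ℝ) < 1 := by
          calc (1:ℝ) = ∑ _l : Fin n, 1 / (n:ℝ) := husum.symm
            _ < ∑ l, p l := Finset.sum_lt_sum (fun l _ => hno l) ⟨l0, mem_univ _, hl0'⟩
            _ = 1 := hsum
        exact absurd h1 (lt_irrefl _)
      obtain ⟨jj, hjj⟩ := hexj
      have hexi : ∃ ii, 1 / (n:ℝ) < p ii := by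
        by_contra hno
        push_neg at hno
        have h1 : (1:ℝ) < 1 := by
          calc (1:ℝ) = ∑ l, p l := hsum.symm
            _ < ∑ _l : Fin n, 1 / (n:ℝ) :=
              Finset.sum_lt_sum (fun l _ => hno l) ⟨jj, mem_univ _, hjj⟩
            _ = 1 := husum
        exact absurd h1 (lt_irrefl _)
      obtain ⟨ii, hii⟩ := hexi
      have hij : ii ≠ jj := by
        rintro rfl
        exact absurd (hjj.trans hii) (lt_irrefl _)
      set q : Fin n → ℝ := fun l =>
        if l = ii then 1 / (n:ℝ) else if l = jj then p ii + p jj - 1 / (n:ℝ) else p l with hqdef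
      have hqii : q ii = 1 / (n:ℝ) := by simp [hqdef]
      have hqjj : q jj = p ii + p jj - 1 / (n:ℝ) := by
        simp [hqdef, hij.symm]
      have hqo : ∀ l, l ≠ ii → l ≠ jj → q l = p l := by
        intro l h1 h2; simp [hqdef, h1, h2]
      set A : ℝ := (1 / (n:ℝ) - p jj) / (p ii - p jj) with hA
      have hden : 0 < p ii - p jj := by linarith
      have hA0 : 0 ≤ A := div_nonneg (by linarith) hden.le
      have hA1 : A ≤ 1 := by rw [hA, div_le_one hden]; linarith
      have hAval : A * (p ii - p jj) = 1 / (n:ℝ) - p jj := div_mul_cancel₀ _ hden.ne'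
      have h1 : q ii = A * p ii + (1 - A) * p jj := by
        rw [hqii]; nlinarith [hAval]
      have h2 : q jj = (1 - A) * p ii + A * p jj := by
        rw [hqjj]; nlinarith [hAval]
      have step := tailProb_pair_le n c k p q hp0 ii jj hij A hA0 hA1 h1 h2 hqo
      have hq0 : ∀ l, 0 ≤ q l := by
        intro l
        by_cases e1 : l = ii
        · rw [e1, hqii]; positivity
        · by_cases e2 : l = jj
          · rw [e2, hqjj]; linarith [hp0 jj]
          · rw [hqo l e1 e2]; exact hp0 l
      have hqsum : ∑ l, q l = 1 := by
        have hdiff : ∑ l, (q l - p l) = (q ii - p ii) + (q jj - p jj) := by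
          apply Finset.sum_eq_add ii jj hij
          · intro l _ hl
            rw [hqo l hl.1 hl.2]; ring
          · intro h; exact absurd (mem_univ ii) h
          · intro h; exact absurd (mem_univ jj) h
        rw [Finset.sum_sub_distrib, hsum] at hdiff
        rw [hqii] at hdiff
        rw [hqjj] at hdiff
        have : ∑ l, q l - 1 = 0 := by rw [hdiff]; ring
        linarith
      have hqcard : (univ.filter (fun l => q l ≠ 1 / (n:ℝ))).card ≤ N := by
        have hsub : univ.filter (fun l => q l ≠ 1 / (n:ℝ))
            ⊆ (univ.filter (fun l => p l ≠ 1 / (n:ℝ))).erase ii := by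
          intro l hl
          simp only [mem_filter, mem_univ, true_and] at hl
          rw [Finset.mem_erase]
          constructor
          · intro h; rw [h, hqii] at hl; exact hl rfl
          · simp only [mem_filter, mem_univ, true_and]
            by_cases e1 : l = ii
            · exact absurd (e1 ▸ hqii) hl
            · by_cases e2 : l = jj
              · rw [e2]; exact ne_of_lt hjj
              · rw [← hqo l e1 e2]; exact hl
        have hiimem : ii ∈ univ.filter (fun l => p l ≠ 1 / (n:ℝ)) := by
          simp only [mem_filter, mem_univ, true_and]
          exact ne_of_gt hii
        have := Finset.card_le_card hsub
        rw [Finset.card_erase_of_mem hiimem] at this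
        omega
      exact le_trans (ih q hqcard hq0 hqsum) step

lemma tailProb_nonneg (n c k : ℕ) (p : Fin n → ℝ) (hp0 : ∀ l, 0 ≤ p l) :
    0 ≤ tailProb n c k p := by
  apply Finset.sum_nonneg
  intro f _
  split
  · exact Finset.prod_nonneg fun t _ => hp0 _
  · exact le_refl 0

lemma tailProb_le_sum (n c k : ℕ) (hcn : c ≤ n) (p : Fin n → ℝ) (hp0 : ∀ l, 0 ≤ p l) :
    tailProb n c k p ≤ ∑ i : Fin n, (∑ l ∈ univ.erase i, p l) ^ k := by
  classical
  have step1 : tailProb n c k p ≤ ∑ f : Fin k → Fin n, ∑ i : Fin n,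
      (if ∀ t, f t ≠ i then ∏ t, p (f t) else 0) := by
    apply Finset.sum_le_sum
    intro f _
    by_cases hdc : distinctCount f < c
    · rw [if_pos hdc]
      have hlt : (image f univ).card < n := lt_of_lt_of_le hdc hcn
      have hex : ∃ i : Fin n, i ∉ image f univ := by
        by_contra h
        push_neg at h
        have hsub : (univ : Finset (Fin n)) ⊆ image f univ := fun v _ => h v
        have := Finset.card_le_card hsub
        rw [card_univ, Fintype.card_fin] at this
        omega
      obtain ⟨i0, hi0⟩ := hex
      have hcond : ∀ t, f t ≠ i0 := fun t ht => hi0 (mem_image.2 ⟨t, mem_univ t, ht⟩)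
      calc ∏ t, p (f t) = (if ∀ t, f t ≠ i0 then ∏ t, p (f t) else 0) := by rw [if_pos hcond]
        _ ≤ ∑ i : Fin n, (if ∀ t, f t ≠ i then ∏ t, p (f t) else 0) := by
            apply Finset.single_le_sum (f := fun i => if ∀ t, f t ≠ i then ∏ t, p (f t) else 0)
              (fun i _ => ?_) (mem_univ i0)
            split
            · exact Finset.prod_nonneg fun t _ => hp0 _
            · exact le_refl 0
    · rw [if_neg hdc]
      apply Finset.sum_nonneg
      intro i _
      split
      · exact Finset.prod_nonneg fun t _ => hp0 _
      · exact le_refl 0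
  rw [Finset.sum_comm] at step1
  refine step1.trans (le_of_eq (Finset.sum_congr rfl fun i _ => ?_))
  rw [← Finset.sum_filter, Finset.sum_pow']
  apply Finset.sum_congr
  · ext f
    simp [Fintype.mem_piFinset, Finset.mem_erase]
  · intro f _; rfl

lemma tailProb_summable (n c : ℕ) (hcn : c ≤ n) (p : Fin n → ℝ)
    (hppos : ∀ l, 0 < p l) (hsum : ∑ l, p l = 1) :
    Summable (fun k => tailProb n c k p) := by
  apply Summable.of_nonneg_of_le
    (fun k => tailProb_nonneg n c k p (fun l => (hppos l).le))
    (fun k => tailProb_le_sum n c k hcn p (fun l => (hppos l).le))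
  apply summable_sum
  intro i _
  apply summable_geometric_of_lt_one
  · exact Finset.sum_nonneg fun l _ => (hppos l).le
  · have h := Finset.add_sum_erase univ p (mem_univ i)
    rw [hsum] at h
    linarith [hppos i]

/-- The uniform distribution minimizes the expected collection time:
`E[T_{c,n}(u)] ≤ E[T_{c,n}(p)]`, where `E[T] = ∑_{k≥0} Pr{T > k}`. -/
theorem uniform_minimizes_expectation (n : ℕ) (hn : 1 ≤ n) (p : Fin n → ℝ)
    (hp : ∀ i, p i ∈ Set.Ioo (0:ℝ) 1) (hsum : ∑ i, p i = 1)
    (c : ℕ) (hc : 1 ≤ c) (hcn : c ≤ n) :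
    ∑' k : ℕ, tailProb n c k (fun _ => 1 / n) ≤ ∑' k : ℕ, tailProb n c k p := by
  have hnR : (0:ℝ) < n := by exact_mod_cast hn
  have husum : ∑ _l : Fin n, (1 / (n:ℝ)) = 1 := by
    rw [Finset.sum_const, card_univ, Fintype.card_fin, nsmul_eq_mul]
    field_simp
  apply Summable.tsum_le_tsum
  · intro k
    exact uniform_le_tailProb n c k _ p le_rfl (fun l => (hp l).1.le) hsum
  · exact tailProb_summable n c hcn _ (fun _ => by positivity) husum
  · exact tailProb_summable n c hcn p (fun l => (hp l).1) hsum
end
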